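/- arXiv:2407.15001 — 2 statements merged into one kernel-verified Lean document; each statement's English description precedes it below -/
import Mathlib

section
/- Let β > −1 and N ∈ ℕ with 2 ≤ |n⃗| ≤ N. Let Q be a monic real polynomial of degree |n⃗| satisfying the type II Hahn orthogonality conditions: ∑_{k=0}^N Q(k) · [Γ(k+α_i+j+1)/Γ(k+1)] · [Γ(β+N−k+1)/Γ(N−k+1)] = 0 for every i ∈ {1,…,p} and every j ∈ {0,…,n_i−1}. Then for every real s > 0: ∑_{k=0}^N Q(k) · [Γ(N−k+β+1)/Γ(N−k+1)] · [Γ(k+s)/Γ(k+1)] = [(−1)^{|n⃗|} Γ(|n⃗|+β+1) / ((N−|n⃗|)! ∏_{i=1}^p (α_i+β+|n⃗|+1)_{n_i})] · [Γ(s) Γ(s+N+β+1) / Γ(s+|n⃗|+β+1)] · ∏_{i=1}^p (α_i+1−s)_{n_i}. -/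
open Finset

/-- The Pochhammer symbol (rising factorial) `(a)_m` for a real number `a`. -/
noncomputable def poch (a : ℝ) (m : ℕ) : ℝ := (ascPochhammer ℝ m).eval a

section helpers
open Polynomial fwdDiff

lemma poch_prod (x : ℝ) (m : ℕ) : poch x m = ∏ t ∈ range m, (x + t) := by
  induction m with
  | zero => simp [poch]
  | succ m ih =>
    rw [poch, ascPochhammer_succ_right, prod_range_succ, ← ih]
    simp [poch]

lemma Gamma_poch {x : ℝ} (hx : 0 < x) (m : ℕ) :
    Real.Gamma (x + m) = poch x m * Real.Gamma x := by
  induction m with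
  | zero => simp [poch]
  | succ m ih =>
    have h1 : x + (m + 1 : ℕ) = (x + m) + 1 := by push_cast; ring
    have h2 : x + (m:ℝ) ≠ 0 := by positivity
    rw [h1, Real.Gamma_add_one h2, ih]
    have : poch x (m+1) = poch x m * (x + m) := by
      rw [poch, poch, ascPochhammer_succ_right]; simp
    rw [this]; ring

lemma poch_pos {x : ℝ} (hx : 0 < x) (m : ℕ) : 0 < poch x m := by
  rw [poch_prod]
  exact prod_pos fun t _ => by positivity

noncomputable def polyDiff (g : ℝ[X]) : ℝ[X] := g.comp (X + C 1) - g

lemma taylor_one_eq (g : ℝ[X]) : (Polynomial.taylor 1 g : ℝ[X]) = g.comp (X + C 1) := by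
  rfl

lemma coeff_polyDiff_of_le {g : ℝ[X]} {j : ℕ} (hj : g.natDegree ≤ j) :
    (polyDiff g).coeff j = 0 := by
  have h1 : (g.comp (X + C 1)).coeff j = (Polynomial.hasseDeriv j g).eval 1 := by
    rw [← taylor_one_eq]; exact Polynomial.taylor_coeff 1 g j
  have hd : (Polynomial.hasseDeriv j g).natDegree ≤ 0 := by
    rw [Polynomial.natDegree_hasseDeriv]; omega
  have h2 : Polynomial.hasseDeriv j g = C (g.coeff j) := by
    have := Polynomial.eq_C_of_natDegree_le_zero hd
    rwa [Polynomial.hasseDeriv_coeff, Nat.zero_add, Nat.choose_self, Nat.cast_one, one_mul] at this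
  rw [polyDiff, Polynomial.coeff_sub, h1, h2]
  simp

lemma coeff_polyDiff_top {g : ℝ[X]} {d : ℕ} (hg : g.natDegree ≤ d + 1) :
    (polyDiff g).coeff d = (d+1) * g.coeff (d+1) := by
  have h1 : (g.comp (X + C 1)).coeff d = (Polynomial.hasseDeriv d g).eval 1 := by
    rw [← taylor_one_eq]; exact Polynomial.taylor_coeff 1 g d
  have hd : (Polynomial.hasseDeriv d g).natDegree ≤ 1 := by
    rw [Polynomial.natDegree_hasseDeriv]; omega
  have h2 := Polynomial.eq_X_add_C_of_natDegree_le_one hd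
  have hc1 : (Polynomial.hasseDeriv d g).coeff 1 = (d+1) * g.coeff (d+1) := by
    rw [Polynomial.hasseDeriv_coeff]
    have : (1 + d).choose d = d + 1 := by
      rw [Nat.add_comm]; exact Nat.choose_succ_self_right d
    rw [this]
    push_cast
    ring_nf
  have hc0 : (Polynomial.hasseDeriv d g).coeff 0 = g.coeff d := by
    rw [Polynomial.hasseDeriv_coeff, Nat.zero_add, Nat.choose_self, Nat.cast_one, one_mul]
  have : (Polynomial.hasseDeriv d g).eval 1 = (d+1) * g.coeff (d+1) + g.coeff d := by
    rw [h2]; simp [hc1, hc0]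
  rw [polyDiff, Polynomial.coeff_sub, h1, this]
  ring

lemma natDegree_polyDiff {g : ℝ[X]} {d : ℕ} (hg : g.natDegree ≤ d + 1) :
    (polyDiff g).natDegree ≤ d := by
  apply Polynomial.natDegree_le_iff_coeff_eq_zero.mpr
  intro j hj
  exact coeff_polyDiff_of_le (by omega)

lemma polyDiff_iter_eq (g : ℝ[X]) (d : ℕ) (hg : g.natDegree ≤ d) :
    polyDiff^[d] g = C ((d.factorial : ℝ) * g.coeff d) := by
  induction d generalizing g with
  | zero => simpa using (Polynomial.eq_C_of_natDegree_le_zero hg).symm ▸ by simp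
  | succ d ih =>
    rw [Function.iterate_succ_apply, ih _ (natDegree_polyDiff hg), coeff_polyDiff_top hg]
    congr 1
    push_cast [Nat.factorial_succ]
    ring

lemma fwdDiff_poly (g : ℝ[X]) :
    Δ_[(1:ℕ)] (fun k : ℕ => g.eval (k:ℝ)) = fun k : ℕ => (polyDiff g).eval (k:ℝ) := by
  funext k
  simp only [fwdDiff, polyDiff, Polynomial.eval_sub, Polynomial.eval_comp, Polynomial.eval_add,
    Polynomial.eval_X, Polynomial.eval_one, Polynomial.eval_C]
  push_cast
  ring

lemma fwdDiff_iter_poly (g : ℝ[X]) (d : ℕ) :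
    (Δ_[(1:ℕ)])^[d] (fun k : ℕ => g.eval (k:ℝ)) = fun k : ℕ => (polyDiff^[d] g).eval (k:ℝ) := by
  induction d generalizing g with
  | zero => simp
  | succ d ih =>
    rw [Function.iterate_succ_apply, fwdDiff_poly, ih, Function.iterate_succ_apply]

lemma altsum_eq (N : ℕ) (g : ℝ[X]) (hg : g.natDegree ≤ N) :
    ∑ k ∈ range (N+1), (-1:ℝ)^k * (N.choose k) * g.eval (k:ℝ)
      = (-1)^N * (N.factorial : ℝ) * g.coeff N := by
  have h := fwdDiff_iter_eq_sum_shift (1:ℕ) (fun k : ℕ => g.eval (k:ℝ)) N 0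
  rw [fwdDiff_iter_poly, polyDiff_iter_eq g N hg] at h
  simp only [Polynomial.eval_C, zsmul_eq_mul, Int.cast_mul, Int.cast_pow, Int.cast_neg,
    Int.cast_one, Int.cast_natCast, smul_eq_mul, mul_one, Nat.zero_add] at h
  calc ∑ k ∈ range (N+1), (-1:ℝ)^k * (N.choose k) * g.eval (k:ℝ)
      = ∑ k ∈ range (N+1), (-1:ℝ)^N * ((-1)^(N-k) * (N.choose k) * g.eval (k:ℝ)) := by
        apply Finset.sum_congr rfl
        intro k hk
        have hkN : k ≤ N := by simpa using Nat.lt_succ_iff.mp (Finset.mem_range.mp hk)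
        have : (-1:ℝ)^N * (-1)^(N-k) = (-1)^k := by
          rw [← pow_add]
          have : N + (N - k) = k + 2 * (N - k) := by omega
          rw [this, pow_add, pow_mul]
          norm_num
        rw [← mul_assoc, ← mul_assoc, this]
    _ = (-1)^N * ∑ k ∈ range (N+1), (-1:ℝ)^(N-k) * (N.choose k) * g.eval (k:ℝ) := by
        rw [Finset.mul_sum]
    _ = (-1)^N * (N.factorial : ℝ) * g.coeff N := by rw [← h]; ring

lemma poch_shift (x : ℝ) (L : ℕ) :
    x * ∏ j ∈ range L, (x+1+j) = (∏ j ∈ range L, (x+j)) * (x+L) := by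
  have h2 : ∏ j ∈ range (L+1), (x + j) = (∏ j ∈ range L, (x+1+j)) * x := by
    rw [prod_range_succ' (fun j : ℕ => x + j) L]
    congr 1
    · apply Finset.prod_congr rfl; intro j _; push_cast; ring
    · simp
  rw [prod_range_succ] at h2
  linarith [h2]

lemma gamma_prod_id (β : ℝ) (hβ : -1 < β) (N S m : ℕ) (hm : S + m ≤ N) :
    ∀ k, k ≤ N → Real.Gamma (β + N + 1 - k) * ∏ t ∈ range k, (β + S + m - t)
      = Real.Gamma (β + S + m + 1) * ∏ j ∈ range (N - S - m), (β + S + m + 1 + j - k) := by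
  have hL : ((N - S - m : ℕ) : ℝ) = (N:ℝ) - S - m := by
    have h : N - S - m = N - (S + m) := by omega
    rw [h, Nat.cast_sub (by omega : S + m ≤ N)]
    push_cast; ring
  intro k
  induction k with
  | zero =>
    intro _
    have hx : (0:ℝ) < β + S + m + 1 := by
      have : (0:ℝ) ≤ (S:ℝ) + m := by positivity
      linarith
    have h1 : β + (N:ℝ) + 1 - 0 = (β + S + m + 1) + ((N - S - m : ℕ) : ℝ) := by
      rw [hL]; ring
    rw [show ((0:ℕ):ℝ) = 0 by norm_num, h1, Gamma_poch hx, poch_prod]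
    simp only [range_zero, prod_empty, mul_one]
    rw [mul_comm]
    congr 1
    apply Finset.prod_congr rfl; intro j _; ring
  | succ k ih =>
    intro hk1
    have hk : k ≤ N := by omega
    have ihk := ih hk
    set L := N - S - m with hLdef
    set x : ℝ := β + S + m - (k : ℕ) with hxdef
    have hxL : x + L = β + N - k := by rw [hxdef, hL]; ring
    have hpos : (0:ℝ) < β + N - k := by
      have h1 : (k:ℝ) + 1 ≤ N := by exact_mod_cast hk1
      linarith
    have hG : Real.Gamma (β + N + 1 - k) = (β + N - k) * Real.Gamma (β + N - k) := by
      rw [show β + (N:ℝ) + 1 - k = (β + N - k) + 1 by ring]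
      exact Real.Gamma_add_one (ne_of_gt hpos)
    have key := poch_shift x L
    have hfact : ∀ j : ℕ, β + S + m + 1 + (j:ℝ) - k = x + 1 + j := by
      intro j; rw [hxdef]; ring
    have hfact2 : ∀ j : ℕ, β + S + m + 1 + (j:ℝ) - ((k+1:ℕ):ℝ) = x + j := by
      intro j; rw [hxdef]; push_cast; ring
    rw [Finset.prod_congr rfl (fun j _ => hfact j), hG] at ihk
    rw [prod_range_succ, Finset.prod_congr rfl (fun j _ => hfact2 j),
      show β + (N:ℝ) + 1 - ((k+1:ℕ):ℝ) = β + N - k by push_cast; ring,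
      show β + (S:ℝ) + m - (k:ℕ) = x from rfl]
    apply mul_left_cancel₀ (show x + (L:ℝ) ≠ 0 by rw [hxL]; exact ne_of_gt hpos)
    rw [hxL] at key ⊢
    linear_combination x * ihk + Real.Gamma (β + S + m + 1) * key

end helpers

/-- The discrete Mellin transform of the weighted type II Hahn polynomial. -/
theorem hahn_typeII_discrete_mellin
    (p : ℕ) (hp : 0 < p) (n : Fin p → ℕ) (hn : ∀ i, 0 < n i)
    (S : ℕ) (hS : S = ∑ i, n i)
    (α : Fin p → ℝ) (hα : ∀ i, -1 < α i)
    (hαint : ∀ i j, i ≠ j → ∀ z : ℤ, α i - α j ≠ (z : ℝ))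
    (β : ℝ) (hβ : -1 < β) (N : ℕ) (hS2 : 2 ≤ S) (hSN : S ≤ N)
    (Q : Polynomial ℝ) (hmonic : Q.Monic) (hdeg : Q.natDegree = S)
    (horth : ∀ i, ∀ j < n i,
      ∑ k ∈ range (N + 1),
        Q.eval (k : ℝ) * (Real.Gamma ((k : ℝ) + α i + j + 1) / Real.Gamma ((k : ℝ) + 1)) *
          (Real.Gamma (β + N - k + 1) / Real.Gamma ((N : ℝ) - k + 1)) = 0) :
    ∀ s : ℝ, 0 < s →
      ∑ k ∈ range (N + 1),
        Q.eval (k : ℝ) * (Real.Gamma ((N : ℝ) - k + β + 1) / Real.Gamma ((N : ℝ) - k + 1)) *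
          (Real.Gamma ((k : ℝ) + s) / Real.Gamma ((k : ℝ) + 1)) =
        ((-1 : ℝ) ^ S * Real.Gamma (S + β + 1) /
            ((Nat.factorial (N - S) : ℝ) * ∏ i, poch (α i + β + S + 1) (n i))) *
          (Real.Gamma s * Real.Gamma (s + N + β + 1) / Real.Gamma (s + S + β + 1)) *
          ∏ i, poch (α i + 1 - s) (n i) := by
  classical
  set w : ℕ → ℝ := fun k => Real.Gamma ((N : ℝ) - k + β + 1) / Real.Gamma ((N : ℝ) - k + 1)
    with hw
  set C₀ : ℝ := (-1 : ℝ) ^ S * Real.Gamma (S + β + 1) /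
      ((Nat.factorial (N - S) : ℝ) * ∏ i, poch (α i + β + S + 1) (n i)) with hC₀
  set Pl : Polynomial ℝ :=
      ∑ k ∈ range (N + 1),
        Polynomial.C (Q.eval (k:ℝ) * w k / (Nat.factorial k : ℝ)) * ascPochhammer ℝ k with hPl
  set Rr : Polynomial ℝ := C₀ •
      ((ascPochhammer ℝ (N - S)).comp (Polynomial.X + Polynomial.C ((S:ℝ) + β + 1)) *
        ∏ i, (ascPochhammer ℝ (n i)).comp (Polynomial.C (α i + 1) - Polynomial.X)) with hRr
  -- evaluation formulas
  have hPl_eval : ∀ x : ℝ, Pl.eval x =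
      ∑ k ∈ range (N+1), Q.eval (k:ℝ) * w k / (Nat.factorial k : ℝ) * poch x k := by
    intro x
    rw [hPl, Polynomial.eval_finset_sum]
    apply Finset.sum_congr rfl
    intro k _
    rw [Polynomial.eval_mul, Polynomial.eval_C]
    rfl
  have hRr_eval : ∀ x : ℝ, Rr.eval x =
      C₀ * (poch (x + S + β + 1) (N-S) * ∏ i, poch (α i + 1 - x) (n i)) := by
    intro x
    rw [hRr]
    rw [Polynomial.eval_smul, smul_eq_mul]
    congr 1
    rw [Polynomial.eval_mul, Polynomial.eval_comp, Polynomial.eval_prod]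
    congr 1
    · rw [Polynomial.eval_add, Polynomial.eval_X, Polynomial.eval_C,
        show x + ((S:ℝ) + β + 1) = x + S + β + 1 by ring]
      rfl
    · apply Finset.prod_congr rfl
      intro i _
      rw [Polynomial.eval_comp, Polynomial.eval_sub, Polynomial.eval_X, Polynomial.eval_C]
      rfl
  -- positivity facts
  have hfac_pos : ∀ k : ℕ, (0:ℝ) < (Nat.factorial k : ℝ) := fun k => by
    exact_mod_cast Nat.factorial_pos k
  -- cast facts
  have hcast : ∀ k, k ∈ range (N+1) → ((N:ℝ) - k = ((N - k : ℕ) : ℝ)) := by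
    intro k hk
    have hkN : k ≤ N := by
      have := Finset.mem_range.mp hk; omega
    rw [Nat.cast_sub hkN]
  -- degree bounds
  have hdegPl : Pl.natDegree ≤ N := by
    rw [hPl]
    apply Polynomial.natDegree_sum_le_of_forall_le
    intro k hk
    have hkN : k ≤ N := by have := Finset.mem_range.mp hk; omega
    calc (Polynomial.C (Q.eval (k:ℝ) * w k / (Nat.factorial k : ℝ)) *
            ascPochhammer ℝ k).natDegree
        ≤ (ascPochhammer ℝ k).natDegree := Polynomial.natDegree_C_mul_le _ _
      _ = k := ascPochhammer_natDegree (S := ℝ) k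
      _ ≤ N := hkN
  have hdegRr : Rr.natDegree ≤ N := by
    rw [hRr]
    refine le_trans (Polynomial.natDegree_smul_le _ _) ?_
    refine le_trans Polynomial.natDegree_mul_le ?_
    have h1 : ((ascPochhammer ℝ (N-S)).comp
        (Polynomial.X + Polynomial.C ((S:ℝ)+β+1))).natDegree ≤ N - S := by
      rw [Polynomial.natDegree_comp, ascPochhammer_natDegree (S := ℝ), Polynomial.natDegree_X_add_C]
      simp
    have h2 : (∏ i, (ascPochhammer ℝ (n i)).comp
        (Polynomial.C (α i + 1) - Polynomial.X)).natDegree ≤ S := by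
      refine le_trans (Polynomial.natDegree_prod_le _ _) ?_
      rw [hS]
      apply Finset.sum_le_sum
      intro i _
      rw [Polynomial.natDegree_comp, ascPochhammer_natDegree (S := ℝ)]
      have hne : (Polynomial.C (α i + 1) - Polynomial.X : Polynomial ℝ).natDegree = 1 := by
        rw [show (Polynomial.C (α i + 1) - Polynomial.X : Polynomial ℝ)
              = -(Polynomial.X - Polynomial.C (α i + 1)) by ring, Polynomial.natDegree_neg,
          Polynomial.natDegree_X_sub_C]
      rw [hne, mul_one]
    exact le_trans (add_le_add h1 h2) (by omega)
  -- evaluation at the positive points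
  have hE1 : ∀ i : Fin p, ∀ j : ℕ, j < n i → Pl.eval (α i + j + 1) = 0 := by
    intro i j hj
    set x : ℝ := α i + j + 1 with hx
    have hxpos : 0 < x := by
      rw [hx]; linarith [hα i, (Nat.cast_nonneg j : (0:ℝ) ≤ j)]
    have hGx : Real.Gamma x ≠ 0 := ne_of_gt (Real.Gamma_pos_of_pos hxpos)
    have horth' := horth i j hj
    have hterm : ∀ k ∈ range (N+1),
        Q.eval (k:ℝ) * (Real.Gamma ((k:ℝ) + α i + j + 1) / Real.Gamma ((k:ℝ) + 1)) *
          (Real.Gamma (β + N - k + 1) / Real.Gamma ((N:ℝ) - k + 1))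
        = Real.Gamma x * (Q.eval (k:ℝ) * w k / (Nat.factorial k : ℝ) * poch x k) := by
      intro k hk
      have h1 : (k:ℝ) + α i + j + 1 = x + k := by rw [hx]; ring
      have h2 : Real.Gamma ((k:ℝ) + 1) = Nat.factorial k := Real.Gamma_nat_eq_factorial k
      have h3 : β + (N:ℝ) - k + 1 = (N:ℝ) - k + β + 1 := by ring
      rw [h1, Gamma_poch hxpos k, h2, h3]
      simp only [hw]
      ring
    rw [Finset.sum_congr rfl hterm, ← Finset.mul_sum] at horth'
    rcases mul_eq_zero.mp horth' with h | h
    · exact absurd h hGx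
    · rw [hPl_eval]; exact h
  have hE2 : ∀ i : Fin p, ∀ j : ℕ, j < n i → Rr.eval (α i + j + 1) = 0 := by
    intro i j hj
    rw [hRr_eval]
    have hz : poch (α i + 1 - (α i + j + 1)) (n i) = 0 := by
      rw [poch_prod]
      apply Finset.prod_eq_zero (Finset.mem_range.mpr hj)
      push_cast; ring
    rw [Finset.prod_eq_zero (Finset.mem_univ i) hz]
    ring
  -- evaluation at the nonpositive points
  have hE3 : ∀ m : ℕ, m ≤ N - S →
      Pl.eval (-(β + S + m)) = (if m = 0 then (-1:ℝ)^S * Real.Gamma (β + S + 1) else 0) := by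
    intro m hm
    have hmSN : S + m ≤ N := by omega
    set Ψ : Polynomial ℝ :=
      ∏ j ∈ range (N - S - m), (Polynomial.C (β + S + m + 1 + j) - Polynomial.X) with hΨ
    have hΨeval : ∀ y : ℝ, Ψ.eval y = ∏ j ∈ range (N - S - m), (β + S + m + 1 + j - y) := by
      intro y
      rw [hΨ, Polynomial.eval_prod]
      apply Finset.prod_congr rfl
      intro j _
      simp
    have hfacdeg : ∀ c : ℝ, (Polynomial.C c - Polynomial.X : Polynomial ℝ).natDegree = 1 := by
      intro c
      rw [show (Polynomial.C c - Polynomial.X : Polynomial ℝ)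
            = -(Polynomial.X - Polynomial.C c) by ring, Polynomial.natDegree_neg,
        Polynomial.natDegree_X_sub_C]
    have hΨdeg : Ψ.natDegree ≤ N - S - m := by
      rw [hΨ]
      refine le_trans (Polynomial.natDegree_prod_le _ _) (le_of_eq ?_)
      have h := Finset.sum_congr rfl
        (fun j (_ : j ∈ range (N-S-m)) => hfacdeg (β + S + m + 1 + (j:ℝ)))
      rw [h]
      simp
    have hQΨdeg : (Q * Ψ).natDegree ≤ N := by
      refine le_trans Polynomial.natDegree_mul_le ?_
      rw [hdeg]
      omega
    have hterm : ∀ k ∈ range (N+1),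
        Q.eval (k:ℝ) * w k / (Nat.factorial k : ℝ) * poch (-(β + S + m)) k
          = (Real.Gamma (β + S + m + 1) / (Nat.factorial N : ℝ)) *
            ((-1:ℝ)^k * (N.choose k) * (Q * Ψ).eval (k:ℝ)) := by
      intro k hk
      have hkN : k ≤ N := by have := Finset.mem_range.mp hk; omega
      have hpoch : poch (-(β + S + m)) k = (-1:ℝ)^k * ∏ t ∈ range k, (β + S + m - t) := by
        rw [poch_prod]
        calc ∏ t ∈ range k, (-(β + ↑S + ↑m) + (t:ℝ))
            = ∏ t ∈ range k, (-1:ℝ) * (β + S + m - t) :=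
              Finset.prod_congr rfl fun t _ => by ring
          _ = (-1:ℝ)^k * ∏ t ∈ range k, (β + S + m - t) := by
              rw [Finset.prod_mul_distrib, Finset.prod_const, Finset.card_range]
      have hw1 : Real.Gamma ((N:ℝ) - k + 1) = (Nat.factorial (N - k) : ℝ) := by
        rw [hcast k hk]
        exact_mod_cast Real.Gamma_nat_eq_factorial (N - k)
      have hgp := gamma_prod_id β hβ N S m hmSN k hkN
      have hchoose : (N.choose k : ℝ) * (Nat.factorial k : ℝ) * (Nat.factorial (N-k) : ℝ)
          = (Nat.factorial N : ℝ) := by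
        exact_mod_cast Nat.choose_mul_factorial_mul_factorial hkN
      have hargs : (N:ℝ) - k + β + 1 = β + N + 1 - k := by ring
      simp only [hw]
      rw [hargs, hw1, hpoch, Polynomial.eval_mul, hΨeval]
      have hkfac : (Nat.factorial k : ℝ) ≠ 0 := ne_of_gt (by exact_mod_cast Nat.factorial_pos k)
      have hNkfac : (Nat.factorial (N-k) : ℝ) ≠ 0 :=
        ne_of_gt (by exact_mod_cast Nat.factorial_pos (N-k))
      have hNfac : (Nat.factorial N : ℝ) ≠ 0 := ne_of_gt (by exact_mod_cast Nat.factorial_pos N)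
      have hab : (Nat.factorial k : ℝ) * (Nat.factorial (N-k) : ℝ) ≠ 0 :=
        mul_ne_zero hkfac hNkfac
      calc Q.eval (k:ℝ) * (Real.Gamma (β + ↑N + 1 - ↑k) / (Nat.factorial (N-k) : ℝ)) /
              (Nat.factorial k : ℝ) * ((-1:ℝ)^k * ∏ t ∈ range k, (β + S + m - t))
          = (-1:ℝ)^k * Q.eval (k:ℝ) *
              (Real.Gamma (β + ↑N + 1 - ↑k) * ∏ t ∈ range k, (β + S + m - t)) /
              ((Nat.factorial k : ℝ) * (Nat.factorial (N-k) : ℝ)) := by ring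
        _ = (-1:ℝ)^k * Q.eval (k:ℝ) *
              (Real.Gamma (β + S + m + 1) * ∏ j ∈ range (N - S - m), (β + S + m + 1 + j - k)) /
              ((Nat.factorial k : ℝ) * (Nat.factorial (N-k) : ℝ)) := by rw [hgp]
        _ = (Real.Gamma (β + S + m + 1) / (Nat.factorial N : ℝ)) *
              ((-1:ℝ)^k * (N.choose k) *
                (Q.eval (k:ℝ) * ∏ j ∈ range (N - S - m), (β + S + m + 1 + j - k))) := by
            rw [div_mul_eq_mul_div, div_eq_div_iff hab hNfac]
            linear_combination (-((-1:ℝ)^k * Q.eval (k:ℝ) * Real.Gamma (β + S + m + 1)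
              * (∏ j ∈ range (N - S - m), (β + S + m + 1 + j - k)))) * hchoose
    rw [hPl_eval, Finset.sum_congr rfl hterm, ← Finset.mul_sum,
      altsum_eq N (Q * Ψ) hQΨdeg]
    have hNfac : (Nat.factorial N : ℝ) ≠ 0 := ne_of_gt (by exact_mod_cast Nat.factorial_pos N)
    by_cases hm0 : m = 0
    · subst hm0
      rw [if_pos rfl]
      -- compute the top coefficient of Q * Ψ
      set Ψ' : Polynomial ℝ :=
        ∏ j ∈ range (N - S - 0), (Polynomial.X - Polynomial.C (β + S + (0:ℕ) + 1 + j)) with hΨ'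
      have hsign : Ψ = Polynomial.C ((-1:ℝ)^(N-S-0)) * Ψ' := by
        rw [hΨ]
        calc ∏ j ∈ range (N-S-0), (Polynomial.C (β + ↑S + ↑(0:ℕ) + 1 + ↑j) - Polynomial.X)
            = ∏ j ∈ range (N-S-0), (Polynomial.C (-1:ℝ) *
                (Polynomial.X - Polynomial.C (β + ↑S + ↑(0:ℕ) + 1 + ↑j))) :=
              Finset.prod_congr rfl fun j _ => by rw [Polynomial.C_neg, Polynomial.C_1, neg_one_mul, neg_sub]
          _ = (Polynomial.C (-1:ℝ))^(N-S-0) * Ψ' := by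
              rw [Finset.prod_mul_distrib, Finset.prod_const, Finset.card_range, hΨ']
          _ = Polynomial.C ((-1:ℝ)^(N-S-0)) * Ψ' := by rw [Polynomial.C_pow]
      have hΨ'monic : Ψ'.Monic := Polynomial.monic_prod_of_monic _ _ (fun j _ => Polynomial.monic_X_sub_C _)
      have hΨ'deg : Ψ'.natDegree = N - S - 0 := by
        rw [hΨ', Polynomial.natDegree_prod _ _
          (fun j _ => (Polynomial.monic_X_sub_C _).ne_zero)]
        have h := Finset.sum_congr rfl
          (fun j (_ : j ∈ range (N-S-0)) => Polynomial.natDegree_X_sub_C (β + S + (0:ℕ) + 1 + (j:ℝ)))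
        rw [h]
        simp
      have hQΨ'monic : (Q * Ψ').Monic := hmonic.mul hΨ'monic
      have hQΨ'deg : (Q * Ψ').natDegree = N := by
        rw [hmonic.natDegree_mul hΨ'monic, hdeg, hΨ'deg]
        omega
      have hcoeff : (Q * Ψ).coeff N = (-1:ℝ)^(N-S) := by
        rw [hsign, show Q * (Polynomial.C ((-1:ℝ)^(N-S-0)) * Ψ')
            = Polynomial.C ((-1:ℝ)^(N-S-0)) * (Q * Ψ') by ring, Polynomial.coeff_C_mul,
          ← hQΨ'deg, hQΨ'monic.coeff_natDegree]
        norm_num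
      rw [hcoeff]
      have hsgn : (-1:ℝ)^N * (-1:ℝ)^(N-S) = (-1:ℝ)^S := by
        rw [← pow_add, show N + (N - S) = S + 2 * (N - S) by omega, pow_add, pow_mul]
        norm_num
      have harg : β + (S:ℝ) + ((0:ℕ):ℝ) + 1 = β + S + 1 := by norm_num
      rw [harg]
      field_simp
      linear_combination (Real.Gamma (β + S + 1)) * hsgn
    · rw [if_neg hm0]
      have hlt : (Q * Ψ).natDegree < N := by
        have h1 : (Q * Ψ).natDegree ≤ Q.natDegree + Ψ.natDegree := Polynomial.natDegree_mul_le
        rw [hdeg] at h1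
        omega
      rw [Polynomial.coeff_eq_zero_of_natDegree_lt hlt]
      ring
  have hprodpos : (0:ℝ) < ∏ i, poch (α i + β + S + 1) (n i) := by
    apply Finset.prod_pos
    intro i _
    apply poch_pos
    have h1 := hα i
    have hS2' : (2:ℝ) ≤ S := by exact_mod_cast hS2
    linarith
  have hE4 : ∀ m : ℕ, m ≤ N - S →
      Rr.eval (-(β + S + m)) = (if m = 0 then (-1:ℝ)^S * Real.Gamma (β + S + 1) else 0) := by
    intro m hm
    rw [hRr_eval]
    by_cases hm0 : m = 0
    · subst hm0
      rw [if_pos rfl]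
      have h1 : -(β + ↑S + ((0:ℕ):ℝ)) + ↑S + β + 1 = 1 := by push_cast; ring
      rw [h1]
      have h2 : poch 1 (N-S) = ((N-S).factorial : ℝ) := by
        rw [poch]; exact_mod_cast ascPochhammer_eval_one ℝ (N-S)
      have h3 : (∏ i, poch (α i + 1 - -(β + ↑S + ((0:ℕ):ℝ))) (n i))
          = ∏ i, poch (α i + β + S + 1) (n i) := by
        apply Finset.prod_congr rfl
        intro i _
        congr 1
        push_cast; ring
      have hden : (Nat.factorial (N - S) : ℝ) * ∏ i, poch (α i + β + ↑S + 1) (n i) ≠ 0 :=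
        ne_of_gt (mul_pos (by exact_mod_cast Nat.factorial_pos (N-S)) hprodpos)
      rw [h2, h3, hC₀, div_mul_cancel₀ _ hden,
        show (S:ℝ) + β + 1 = β + S + 1 by ring]
    · rw [if_neg hm0]
      have h1 : -(β + ↑S + ↑m) + ↑S + β + 1 = 1 - (m:ℝ) := by push_cast; ring
      rw [h1]
      have h2 : poch (1 - (m:ℝ)) (N-S) = 0 := by
        rw [poch_prod]
        apply Finset.prod_eq_zero (Finset.mem_range.mpr (show m - 1 < N - S by omega))
        have hc : ((m-1:ℕ):ℝ) = (m:ℝ) - 1 := by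
          rw [Nat.cast_sub (by omega)]; norm_num
        rw [hc]; ring
      rw [h2]
      ring
  -- the finset of N+1 points
  set T₁ : Finset ℝ :=
    ((univ : Finset (Fin p)).sigma fun i => range (n i)).image
      (fun x : Σ _ : Fin p, ℕ => α x.1 + x.2 + 1) with hT₁
  set T₂ : Finset ℝ := (range (N - S + 1)).image (fun m : ℕ => -(β + S + m)) with hT₂
  have hT₁mem : ∀ y ∈ T₁, ∃ i : Fin p, ∃ j : ℕ, j < n i ∧ y = α i + j + 1 := by
    intro y hy
    rw [hT₁, Finset.mem_image] at hy
    obtain ⟨x, hx, rfl⟩ := hy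
    rw [Finset.mem_sigma] at hx
    exact ⟨x.1, x.2, Finset.mem_range.mp hx.2, rfl⟩
  have hT₂mem : ∀ y ∈ T₂, ∃ m : ℕ, m ≤ N - S ∧ y = -(β + S + m) := by
    intro y hy
    rw [hT₂, Finset.mem_image] at hy
    obtain ⟨m, hmr, rfl⟩ := hy
    exact ⟨m, by have := Finset.mem_range.mp hmr; omega, rfl⟩
  have hT₁pos : ∀ y ∈ T₁, 0 < y := by
    intro y hy
    obtain ⟨i, j, _, rfl⟩ := hT₁mem y hy
    have := hα i
    have : (0:ℝ) ≤ j := Nat.cast_nonneg j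
    linarith [hα i]
  have hT₂neg : ∀ y ∈ T₂, y < 0 := by
    intro y hy
    obtain ⟨m, _, rfl⟩ := hT₂mem y hy
    have h1 : (2:ℝ) ≤ S := by exact_mod_cast hS2
    have h2 : (0:ℝ) ≤ m := Nat.cast_nonneg m
    linarith
  have hT₁card : T₁.card = S := by
    rw [hT₁, Finset.card_image_of_injOn, Finset.card_sigma]
    · simp only [Finset.card_range]
      rw [hS]
    · rintro ⟨i, j⟩ ha ⟨i', j'⟩ hb hab
      simp only at hab
      by_cases hii : i = i'
      · subst hii
        have : (j:ℝ) = j' := by linarith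
        have : j = j' := Nat.cast_inj.mp this
        rw [this]
      · exfalso
        exact hαint i i' hii ((j':ℤ) - (j:ℤ)) (by push_cast; linarith)
  have hT₂card : T₂.card = N - S + 1 := by
    rw [hT₂, Finset.card_image_of_injOn, Finset.card_range]
    intro a _ b _ hab
    simpa using hab
  have hdisj : Disjoint T₁ T₂ := by
    rw [Finset.disjoint_left]
    intro y hy1 hy2
    exact absurd (hT₂neg y hy2) (not_lt.mpr (le_of_lt (hT₁pos y hy1)))
  have hcard : (T₁ ∪ T₂).card = N + 1 := by
    rw [Finset.card_union_of_disjoint hdisj, hT₁card, hT₂card]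
    omega
  have hzero : ∀ y ∈ T₁ ∪ T₂, (Pl - Rr).eval y = 0 := by
    intro y hy
    rw [Polynomial.eval_sub, sub_eq_zero]
    rcases Finset.mem_union.mp hy with hy1 | hy2
    · obtain ⟨i, j, hj, rfl⟩ := hT₁mem y hy1
      rw [hE1 i j hj, hE2 i j hj]
    · obtain ⟨m, hm, rfl⟩ := hT₂mem y hy2
      rw [hE3 m hm, hE4 m hm]
  have hPlRr : Pl = Rr := by
    have hdegsub : (Pl - Rr).natDegree < (T₁ ∪ T₂).card := by
      rw [hcard]
      exact lt_of_le_of_lt (le_trans (Polynomial.natDegree_sub_le _ _)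
        (max_le hdegPl hdegRr)) (by omega)
    have := Polynomial.eq_zero_of_natDegree_lt_card_of_eval_eq_zero' (Pl - Rr)
      (T₁ ∪ T₂) hzero hdegsub
    exact sub_eq_zero.mp this
  -- conclusion
  intro s hs
  have hterm : ∀ k ∈ range (N+1),
      Q.eval (k:ℝ) * (Real.Gamma ((N:ℝ) - k + β + 1) / Real.Gamma ((N:ℝ) - k + 1)) *
        (Real.Gamma ((k:ℝ) + s) / Real.Gamma ((k:ℝ) + 1))
      = Real.Gamma s * (Q.eval (k:ℝ) * w k / (Nat.factorial k : ℝ) * poch s k) := by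
    intro k _
    rw [show (k:ℝ) + s = s + k by ring, Gamma_poch hs k, Real.Gamma_nat_eq_factorial k]
    simp only [hw]
    ring
  rw [Finset.sum_congr rfl hterm, ← Finset.mul_sum, ← hPl_eval s, hPlRr, hRr_eval s]
  have hx : (0:ℝ) < s + S + β + 1 := by
    have h1 : (2:ℝ) ≤ S := by exact_mod_cast hS2
    linarith
  have hGx : Real.Gamma (s + S + β + 1) ≠ 0 := ne_of_gt (Real.Gamma_pos_of_pos hx)
  rw [show s + (N:ℝ) + β + 1 = (s + S + β + 1) + ((N - S : ℕ):ℝ) by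
      rw [Nat.cast_sub hSN]; ring,
    Gamma_poch hx (N - S)]
  field_simp
end

section
/- Let β > −1 and N ∈ ℕ with 2 ≤ |n⃗| ≤ N. Let P be a monic real polynomial of degree |n⃗| satisfying the type II Jacobi–Piñeiro orthogonality conditions ∫_0^1 x^j P(x) x^{α_i} (1−x)^β dx = 0 for every i ∈ {1,…,p} and j ∈ {0,…,n_i−1}, and let Q be a monic real polynomial of degree |n⃗| satisfying the type II Hahn orthogonality conditions ∑_{k=0}^N Q(k) · [Γ(k+α_i+j+1)/Γ(k+1)] · [Γ(β+N−k+1)/Γ(N−k+1)] = 0 for every i ∈ {1,…,p} and j ∈ {0,…,n_i−1}. Write P(x) = ∑_{k=0}^{|n⃗|} p_k x^k, and suppose q_0,…,q_{|n⃗|} are real numbers such that Q(x) = ∑_{k=0}^{|n⃗|} q_k ∏_{j=0}^{k−1}(j−x) for all x. Then q_k = (−1)^k (N−k)!/(N−|n⃗|)! · p_k for every k ∈ {0,…,|n⃗|}. -/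
open Finset MeasureTheory Set Polynomial

set_option maxHeartbeats 1000000

noncomputable section


noncomputable def Bi (u v : ℝ) : ℝ := ∫ x in Set.Ioo (0:ℝ) 1, x ^ u * (1 - x) ^ v

lemma Bi_def (u v : ℝ) : Bi u v = ∫ x in Set.Ioo (0:ℝ) 1, x ^ u * (1 - x) ^ v := rfl

lemma complex_eq_on (u v : ℝ) : ∀ x ∈ Set.Ioo (0:ℝ) 1,
    ((x:ℂ) ^ ((u+1:ℂ) - 1) * (1 - (x:ℂ)) ^ ((v+1:ℂ) - 1)) = ((x ^ u * (1-x) ^ v : ℝ) : ℂ) := by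
  intro x hx
  have h1 : ((u+1:ℂ)-1) = (u:ℂ) := by ring
  have h2 : ((v+1:ℂ)-1) = (v:ℂ) := by ring
  rw [h1, h2, Complex.ofReal_mul, Complex.ofReal_cpow hx.1.le,
    Complex.ofReal_cpow (by linarith [hx.2] : (0:ℝ) ≤ 1 - x), Complex.ofReal_sub,
    Complex.ofReal_one]

lemma Bi_integrableOn {u v : ℝ} (hu : -1 < u) (hv : -1 < v) :
    IntegrableOn (fun x : ℝ => x ^ u * (1 - x) ^ v) (Set.Ioo (0:ℝ) 1) := by
  have hc : IntervalIntegrable (fun x : ℝ =>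
      (x : ℂ) ^ ((u+1:ℂ) - 1) * (1 - (x : ℂ)) ^ ((v+1:ℂ) - 1)) volume 0 1 :=
    Complex.betaIntegral_convergent (by simpa using by linarith) (by simpa using by linarith)
  have h2 : IntegrableOn (fun x : ℝ =>
      (x : ℂ) ^ ((u+1:ℂ) - 1) * (1 - (x : ℂ)) ^ ((v+1:ℂ) - 1)) (Set.Ioo (0:ℝ) 1) :=
    ((intervalIntegrable_iff_integrableOn_Ioc_of_le zero_le_one).mp hc).mono_set Set.Ioo_subset_Ioc_self
  have h3 : IntegrableOn (fun x : ℝ => ((x ^ u * (1-x) ^ v : ℝ) : ℂ)) (Set.Ioo (0:ℝ) 1) :=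
    h2.congr_fun (complex_eq_on u v) measurableSet_Ioo
  simpa [IntegrableOn] using h3.re

lemma Gamma_Bi {u v : ℝ} (hu : -1 < u) (hv : -1 < v) :
    Real.Gamma (u+1) * Real.Gamma (v+1) = Real.Gamma (u+v+2) * Bi u v := by
  have h := Complex.Gamma_mul_Gamma_eq_betaIntegral
    (s := (u:ℂ)+1) (t := (v:ℂ)+1) (by simpa using by linarith) (by simpa using by linarith)
  have hbeta : Complex.betaIntegral ((u:ℂ)+1) ((v:ℂ)+1) = ((Bi u v : ℝ) : ℂ) := by
    rw [Complex.betaIntegral, intervalIntegral.integral_of_le zero_le_one,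
      MeasureTheory.integral_Ioc_eq_integral_Ioo,
      setIntegral_congr_fun measurableSet_Ioo (complex_eq_on u v)]
    exact integral_ofReal
  rw [hbeta] at h
  have h1 : ((u:ℂ)+1) + ((v:ℂ)+1) = ((u+v+2 : ℝ) : ℂ) := by push_cast; ring
  rw [h1] at h
  have h2 : ((u:ℂ)+1) = ((u+1:ℝ):ℂ) := by push_cast; ring
  have h3 : ((v:ℂ)+1) = ((v+1:ℝ):ℂ) := by push_cast; ring
  rw [h2, h3, Complex.Gamma_ofReal, Complex.Gamma_ofReal, Complex.Gamma_ofReal] at h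
  exact_mod_cast h

lemma prod_cast_desc (k m : ℕ) (h : m ≤ k) :
    ∏ j ∈ range m, ((k:ℝ) - j) = (k.descFactorial m : ℝ) := by
  induction m with
  | zero => simp
  | succ m ih =>
    rw [Finset.prod_range_succ, ih (le_of_lt (Nat.lt_of_lt_of_le (Nat.lt_succ_self m) h)),
      Nat.descFactorial_succ, Nat.cast_mul, Nat.cast_sub (le_of_lt (Nat.lt_of_lt_of_le (Nat.lt_succ_self m) h))]
    ring

lemma prod_neg_shift (m k : ℕ) :
    ∏ j ∈ range m, ((j:ℝ) - k) = (-1:ℝ)^m * ∏ j ∈ range m, ((k:ℝ) - j) := by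
  calc ∏ j ∈ range m, ((j:ℝ) - k) = ∏ j ∈ range m, (-1:ℝ) * ((k:ℝ) - j) :=
        Finset.prod_congr rfl (by intros; ring)
    _ = _ := by rw [Finset.prod_mul_distrib, Finset.prod_const, Finset.card_range]

lemma prod_shift_zero (m k : ℕ) (h : k < m) :
    ∏ j ∈ range m, ((j:ℝ) - (k:ℝ)) = 0 :=
  Finset.prod_eq_zero (Finset.mem_range.mpr h) (by simp)

lemma Bi_binomial {c β : ℝ} (hc : -1 < c) (hβ : -1 < β) (M : ℕ) :
    ∑ y ∈ range (M+1), (M.choose y : ℝ) * Bi (c + y) (β + (M - y : ℕ)) = Bi c β := by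
  have h1 : ∀ y : ℕ, (-1:ℝ) < c + y := fun y => by
    have : (0:ℝ) ≤ y := Nat.cast_nonneg y
    linarith
  have h2 : ∀ y : ℕ, (-1:ℝ) < β + y := fun y => by
    have : (0:ℝ) ≤ y := Nat.cast_nonneg y
    linarith
  have hint : ∀ y : ℕ, MeasureTheory.IntegrableOn
      (fun x : ℝ => (M.choose y : ℝ) * (x ^ (c + y) * (1 - x) ^ (β + (M - y : ℕ))))
      (Set.Ioo (0:ℝ) 1) :=
    fun y => (Bi_integrableOn (h1 y) (h2 (M - y))).const_mul _
  have hswap : ∑ y ∈ range (M+1), (M.choose y : ℝ) * Bi (c + y) (β + (M - y : ℕ))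
      = ∫ x in Set.Ioo (0:ℝ) 1,
          ∑ y ∈ range (M+1), (M.choose y : ℝ) * (x ^ (c + y) * (1 - x) ^ (β + (M - y : ℕ))) := by
    rw [MeasureTheory.integral_finset_sum _ (fun y _ => hint y)]
    apply Finset.sum_congr rfl
    intro y _
    rw [Bi, ← MeasureTheory.integral_const_mul]
  rw [hswap, Bi]
  apply MeasureTheory.setIntegral_congr_fun measurableSet_Ioo
  intro x hx
  dsimp only
  have hx0 : (0:ℝ) < x := hx.1
  have hx1 : (0:ℝ) < 1 - x := by simp only [Set.mem_Ioo] at hx; linarith [hx.2]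
  have expand : ∀ y ∈ range (M+1), (M.choose y : ℝ) * (x ^ (c + y) * (1-x) ^ (β + (M - y : ℕ)))
      = (x ^ c * (1-x) ^ β) * (x ^ y * (1-x) ^ (M - y) * (M.choose y : ℝ)) := by
    intro y hy
    rw [Real.rpow_add hx0, Real.rpow_add hx1, Real.rpow_natCast, Real.rpow_natCast]
    ring
  rw [Finset.sum_congr rfl expand, ← Finset.mul_sum]
  have hbin : ∑ y ∈ range (M+1), x ^ y * (1-x) ^ (M - y) * (M.choose y : ℝ) = 1 := by
    have h := (add_pow x (1-x) M).symm
    have hxy : x + (1-x) = 1 := by ring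
    rw [hxy, one_pow] at h
    exact h
  rw [hbin, mul_one]

lemma hahn_sum_eval {a β : ℝ} (ha : -1 < a) (hβ : -1 < β) (N m : ℕ) (hm : m ≤ N) :
    ∑ k ∈ range (N+1), (∏ j ∈ range m, ((j:ℝ) - (k:ℕ))) *
        (Real.Gamma ((k:ℝ) + a + 1) / Real.Gamma ((k:ℝ) + 1)) *
        (Real.Gamma (β + (N:ℝ) - (k:ℕ) + 1) / Real.Gamma ((N:ℝ) - (k:ℕ) + 1))
      = (-1:ℝ)^m * (Real.Gamma ((N:ℝ) + a + β + 2) / ((N - m).factorial : ℝ)) *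
          Bi (a + (m:ℕ)) β := by
  set M := N - m with hMdef
  have hN : N = M + m := by omega
  set f : ℕ → ℝ := fun k => (∏ j ∈ range m, ((j:ℝ) - (k:ℕ))) *
        (Real.Gamma ((k:ℝ) + a + 1) / Real.Gamma ((k:ℝ) + 1)) *
        (Real.Gamma (β + (N:ℝ) - (k:ℕ) + 1) / Real.Gamma ((N:ℝ) - (k:ℕ) + 1)) with hf
  have hstep1 : ∑ k ∈ range (N+1), f k = ∑ k ∈ Finset.Ico m (N+1), f k := by
    apply (Finset.sum_subset ?_ ?_).symm
    · intro k hk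
      simp only [Finset.mem_Ico] at hk
      exact Finset.mem_range.mpr hk.2
    · intro k hk hk'
      simp only [Finset.mem_range] at hk
      simp only [Finset.mem_Ico, not_and, not_le] at hk'
      have hkm : k < m := by omega
      rw [hf]
      simp only
      rw [prod_shift_zero m k hkm, zero_mul, zero_mul]
  have hstep2 : ∑ k ∈ Finset.Ico m (N+1), f k = ∑ y ∈ range (M+1), f (m + y) := by
    rw [Finset.sum_Ico_eq_sum_range]
    have h : N + 1 - m = M + 1 := by omega
    rw [h]
  have hterm : ∀ y ∈ range (M+1), f (m + y) =
      (-1:ℝ)^m * (Real.Gamma ((N:ℝ) + a + β + 2) / (M.factorial : ℝ)) *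
        ((M.choose y : ℝ) * Bi (a + (m:ℕ) + (y:ℕ)) (β + ((M - y : ℕ):ℝ))) := by
    intro y hy
    have hyM : y ≤ M := by simpa [Nat.lt_succ_iff] using hy
    have hprod : ∏ j ∈ range m, ((j:ℝ) - ((m+y:ℕ):ℝ)) =
        (-1:ℝ)^m * ((m+y).descFactorial m : ℝ) := by
      rw [prod_neg_shift, prod_cast_desc _ _ (Nat.le_add_right m y)]
    have hdesc : ((m+y).descFactorial m : ℝ) * (y.factorial : ℝ) = ((m+y).factorial : ℝ) := by
      have h := Nat.factorial_mul_descFactorial (Nat.le_add_right m y)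
      have h2 : m + y - m = y := by omega
      rw [h2] at h
      have h3 : (m + y).descFactorial m * y.factorial = (m+y).factorial := by
        rw [Nat.mul_comm]; exact h
      exact_mod_cast h3
    have hGk : Real.Gamma (((m+y:ℕ):ℝ) + 1) = ((m+y).factorial : ℝ) :=
      Real.Gamma_nat_eq_factorial (m+y)
    have hNk : (N:ℝ) - ((m+y:ℕ):ℝ) = ((M - y : ℕ):ℝ) := by
      rw [Nat.cast_sub hyM]
      push_cast [hN]
      ring
    have hGw : Real.Gamma ((N:ℝ) - ((m+y:ℕ):ℝ) + 1) = ((M-y).factorial : ℝ) := by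
      rw [hNk]
      exact Real.Gamma_nat_eq_factorial (M-y)
    have hGB := Gamma_Bi (u := a + ((m+y:ℕ):ℝ)) (v := β + ((M - y:ℕ):ℝ))
      (by have : (0:ℝ) ≤ ((m+y:ℕ):ℝ) := Nat.cast_nonneg _; linarith)
      (by have : (0:ℝ) ≤ ((M-y:ℕ):ℝ) := Nat.cast_nonneg _; linarith)
    have hsum2 : a + ((m+y:ℕ):ℝ) + (β + ((M - y:ℕ):ℝ)) + 2 = (N:ℝ) + a + β + 2 := by
      have : ((m+y:ℕ):ℝ) + ((M-y:ℕ):ℝ) = (N:ℝ) := by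
        rw [Nat.cast_sub hyM]
        push_cast [hN]
        ring
      linarith
    rw [hsum2] at hGB
    have hBieq : Bi (a + ((m+y:ℕ):ℝ)) (β + ((M - y:ℕ):ℝ)) =
        Bi (a + (m:ℕ) + (y:ℕ)) (β + ((M - y : ℕ):ℝ)) := by
      congr 1
      push_cast
      ring
    rw [hf]
    simp only
    rw [hprod]
    have hGa : Real.Gamma (((m+y:ℕ):ℝ) + a + 1) = Real.Gamma ((a + ((m+y:ℕ):ℝ)) + 1) := by
      congr 1; ring
    have hGb : Real.Gamma (β + (N:ℝ) - ((m+y:ℕ):ℝ) + 1) =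
        Real.Gamma ((β + ((M - y:ℕ):ℝ)) + 1) := by
      congr 1
      rw [← hNk]; ring
    rw [hGa, hGb, hGk, hGw]
    have hchoose := Nat.choose_mul_factorial_mul_factorial hyM
    have hchooseR : (M.choose y : ℝ) * (y.factorial : ℝ) * ((M-y).factorial : ℝ)
        = (M.factorial : ℝ) := by exact_mod_cast hchoose
    have hfy : (0:ℝ) < (y.factorial : ℝ) := by exact_mod_cast y.factorial_pos
    have hfw : (0:ℝ) < ((M-y).factorial : ℝ) := by exact_mod_cast (M-y).factorial_pos
    have hfmy : (0:ℝ) < ((m+y).factorial : ℝ) := by exact_mod_cast (m+y).factorial_pos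
    have hfM : (0:ℝ) < (M.factorial : ℝ) := by exact_mod_cast M.factorial_pos
    rw [← hBieq]
    have hkey : ((m+y).descFactorial m : ℝ) / (((m+y).factorial : ℝ) * ((M-y).factorial : ℝ))
        = (M.choose y : ℝ) / (M.factorial : ℝ) := by
      rw [div_eq_div_iff (by positivity) (ne_of_gt hfM)]
      linear_combination ((M.choose y : ℝ) * ((M-y).factorial : ℝ)) * hdesc
        - ((m+y).descFactorial m : ℝ) * hchooseR
    calc (-1:ℝ)^m * ((m+y).descFactorial m : ℝ) *
          (Real.Gamma (a + ((m+y:ℕ):ℝ) + 1) / ((m+y).factorial : ℝ)) *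
          (Real.Gamma (β + ((M - y:ℕ):ℝ) + 1) / ((M-y).factorial : ℝ))
        = (Real.Gamma (a + ((m+y:ℕ):ℝ) + 1) * Real.Gamma (β + ((M - y:ℕ):ℝ) + 1)) *
            ((-1:ℝ)^m * (((m+y).descFactorial m : ℝ) / (((m+y).factorial : ℝ) * ((M-y).factorial : ℝ)))) := by
          ring
      _ = (Real.Gamma ((N:ℝ) + a + β + 2) * Bi (a + ((m+y:ℕ):ℝ)) (β + ((M - y:ℕ):ℝ))) *
            ((-1:ℝ)^m * ((M.choose y : ℝ) / (M.factorial : ℝ))) := by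
          rw [hGB, hkey]
      _ = (-1:ℝ)^m * (Real.Gamma ((N:ℝ) + a + β + 2) / (M.factorial : ℝ)) *
            ((M.choose y : ℝ) * Bi (a + ((m+y:ℕ):ℝ)) (β + ((M - y:ℕ):ℝ))) := by
          ring
  rw [hstep1, hstep2, Finset.sum_congr rfl hterm, ← Finset.mul_sum,
    Bi_binomial (by have : (0:ℝ) ≤ ((m:ℕ):ℝ) := Nat.cast_nonneg _; linarith) hβ M]



noncomputable def Tpoly (γ : ℝ) (A : Polynomial ℝ) : Polynomial ℝ :=
  γ • A + Polynomial.X * Polynomial.derivative A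

lemma Tpoly_coeff (γ : ℝ) (A : Polynomial ℝ) (j : ℕ) :
    (Tpoly γ A).coeff j = (γ + j) * A.coeff j := by
  unfold Tpoly
  rcases j with _ | j
  · simp [Polynomial.coeff_X_mul_zero]
  · simp [Polynomial.coeff_smul, Polynomial.coeff_X_mul, Polynomial.coeff_derivative]
    ring

lemma Tpoly_hasDerivAt (γ : ℝ) (A : Polynomial ℝ) {x : ℝ} (hx : 0 < x) :
    HasDerivAt (fun y => A.eval y * y ^ γ) ((Tpoly γ A).eval x * x ^ (γ - 1)) x := by
  have h1 : HasDerivAt (fun y : ℝ => A.eval y) ((Polynomial.derivative A).eval x) x :=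
    A.hasDerivAt x
  have h2 : HasDerivAt (fun y : ℝ => y ^ γ) (γ * x ^ (γ - 1)) x :=
    Real.hasDerivAt_rpow_const (Or.inl hx.ne')
  have := h1.mul h2
  convert this using 1
  · rfl
  · rfl
  · rfl
  have hxγ : x ^ γ = x * x ^ (γ - 1) := by
    have h := Real.rpow_add_one hx.ne' (γ - 1)
    rw [sub_add_cancel] at h
    rw [h]; ring
  unfold Tpoly
  simp only [Polynomial.eval_add, Polynomial.eval_smul, Polynomial.eval_mul, Polynomial.eval_X,
    smul_eq_mul, Real.rpow_one, hxγ]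
  ring

noncomputable def Titer (δ : ℝ) (A : Polynomial ℝ) : ℕ → Polynomial ℝ
  | 0 => A
  | (k+1) => Tpoly (δ - k) (Titer δ A k)

lemma Titer_coeff (δ : ℝ) (A : Polynomial ℝ) (k : ℕ) (j : ℕ) :
    (Titer δ A k).coeff j = (∏ r ∈ range k, (δ - r + j)) * A.coeff j := by
  induction k with
  | zero => simp [Titer]
  | succ k ih =>
    rw [Titer, Tpoly_coeff, ih, Finset.prod_range_succ]
    ring

lemma Titer_ne_int {δ : ℝ} (hδ : ∀ z : ℤ, δ ≠ (z:ℝ)) (k j : ℕ) (r : ℕ) :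
    δ - r + j ≠ 0 := by
  intro h
  exact hδ ((r:ℤ) - j) (by push_cast; linarith)

lemma Titer_natDegree {δ : ℝ} (hδ : ∀ z : ℤ, δ ≠ (z:ℝ)) (A : Polynomial ℝ) (hA : A ≠ 0) (k : ℕ) :
    (Titer δ A k).natDegree = A.natDegree ∧ Titer δ A k ≠ 0 := by
  have hprod : ∀ j : ℕ, (∏ r ∈ range k, (δ - r + j)) ≠ 0 := fun j =>
    Finset.prod_ne_zero_iff.mpr (fun r _ => Titer_ne_int hδ k j r)
  have hco : ∀ j, ((Titer δ A k).coeff j = 0 ↔ A.coeff j = 0) := by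
    intro j
    rw [Titer_coeff]
    simp [hprod j]
  have hne : Titer δ A k ≠ 0 := by
    intro h0
    apply hA
    ext j
    have := hco j
    rw [h0] at this
    simpa using this.mp (by simp)
  constructor
  · apply le_antisymm
    · apply Polynomial.natDegree_le_iff_coeff_eq_zero.mpr
      intro j hj
      exact (hco j).mpr (Polynomial.coeff_eq_zero_of_natDegree_lt hj)
    · apply Polynomial.le_natDegree_of_ne_zero
      rw [ne_eq, hco]
      exact Polynomial.leadingCoeff_ne_zero.mpr hA
  · exact hne

lemma Titer_zero_of_deg (A : Polynomial ℝ) :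
    Titer 0 A (A.natDegree + 1) = 0 := by
  ext j
  rw [Titer_coeff]
  rcases le_or_gt j A.natDegree with hj | hj
  · have hz : (∏ r ∈ range (A.natDegree + 1), ((0:ℝ) - r + j)) = 0 := by
      apply Finset.prod_eq_zero (Finset.mem_range.mpr (Nat.lt_succ_of_le hj))
      ring
    rw [hz]; simp
  · rw [Polynomial.coeff_eq_zero_of_natDegree_lt hj]; simp

lemma rolle_count (f f' : ℝ → ℝ) (hder : ∀ x ∈ Set.Ioi (0:ℝ), HasDerivAt f (f' x) x) :
    ∀ (k : ℕ) (t : Finset ℝ) (hne : t.Nonempty), t.card = k →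
      (∀ x ∈ t, (0:ℝ) < x ∧ f x = 0) →
      ∃ t' : Finset ℝ, t'.card + 1 = k ∧ ∀ x ∈ t', t.min' hne < x ∧ f' x = 0 := by
  intro k
  induction k with
  | zero => intro t hne hcard _; exact absurd hcard (by simp [Finset.card_ne_zero_of_mem hne.choose_spec])
  | succ k ih =>
    intro t hne hcard hz
    rcases Nat.eq_zero_or_pos k with hk | hk
    · exact ⟨∅, by simp [hk], by simp⟩
    · set a := t.min' hne with ha
      have hat : a ∈ t := t.min'_mem hne
      have h2 : (t.erase a).Nonempty := by
        rw [← Finset.card_pos, Finset.card_erase_of_mem hat, hcard]; omega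
      set b := (t.erase a).min' h2 with hb
      have hbt : b ∈ t.erase a := Finset.min'_mem _ _
      have hab : a < b := Finset.min'_lt_of_mem_erase_min' _ hne hbt
      have ha0 : 0 < a := (hz a hat).1
      have hcont : ContinuousOn f (Set.Icc a b) := fun x hx =>
        ((hder x (lt_of_lt_of_le ha0 hx.1)).continuousAt).continuousWithinAt
      have hfI : f a = f b := by
        rw [(hz a hat).2, (hz b (Finset.mem_of_mem_erase hbt)).2]
      obtain ⟨c, hc, hc0⟩ := exists_deriv_eq_zero hab hcont hfI
      have hcpos : (0:ℝ) < c := lt_trans ha0 hc.1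
      have hfc : f' c = 0 := by
        rw [← (hder c hcpos).deriv]; exact hc0
      obtain ⟨t'', hcard'', ht''⟩ := ih (t.erase a) h2
        (by rw [Finset.card_erase_of_mem hat, hcard]; omega) (fun x hx => hz x (Finset.mem_of_mem_erase hx))
      have hcnot : c ∉ t'' := fun hmem => absurd ((ht'' c hmem).1) (not_lt.mpr hc.2.le)
      refine ⟨insert c t'', ?_, ?_⟩
      · rw [Finset.card_insert_of_notMem hcnot, hcard'']
      · intro x hx
        rcases Finset.mem_insert.mp hx with rfl | hx
        · exact ⟨hc.1, hfc⟩
        · exact ⟨lt_trans hab (ht'' x hx).1, (ht'' x hx).2⟩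

lemma descartes_aux {ι : Type*} [DecidableEq ι] :
    ∀ (m : ℕ) (s : Finset ι), s.card = m → ∀ (γ : ι → ℝ) (n : ι → ℕ) (A : ι → Polynomial ℝ),
    (∀ i ∈ s, ∀ j ∈ s, i ≠ j → ∀ z : ℤ, γ i - γ j ≠ (z:ℝ)) →
    (∀ i ∈ s, (A i).natDegree < n i) →
    (∃ i ∈ s, A i ≠ 0) →
    ∀ (t : Finset ℝ), (∀ x ∈ t, 0 < x ∧ ∑ i ∈ s, (A i).eval x * x ^ (γ i) = 0) →
    t.card < ∑ i ∈ s, n i := by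
  intro m
  induction m using Nat.strong_induction_on with
  | _ m ih =>
  intro s hcard γ n A hγ hdeg hA t ht
  obtain ⟨i₁, hi₁s, hi₁⟩ := hA
  have hm1 : 1 ≤ m := by
    rw [← hcard]; exact Finset.card_pos.mpr ⟨i₁, hi₁s⟩
  by_cases hzero : ∃ i ∈ s, A i = 0
  · obtain ⟨i₂, hi₂s, hi₂⟩ := hzero
    have hne : i₁ ≠ i₂ := fun h => hi₁ (h ▸ hi₂)
    have hcard' : (s.erase i₂).card < m := by
      rw [Finset.card_erase_of_mem hi₂s, hcard]; omega
    calc t.card < ∑ i ∈ s.erase i₂, n i := by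
          apply ih _ hcard' _ rfl γ n A
            (fun i hi j hj hij => hγ i (Finset.mem_of_mem_erase hi) j (Finset.mem_of_mem_erase hj) hij)
            (fun i hi => hdeg i (Finset.mem_of_mem_erase hi))
            ⟨i₁, Finset.mem_erase.mpr ⟨hne, hi₁s⟩, hi₁⟩ t
          intro x hx
          refine ⟨(ht x hx).1, ?_⟩
          rw [Finset.sum_erase _ (by simp [hi₂])]
          exact (ht x hx).2
      _ ≤ ∑ i ∈ s, n i := Finset.sum_le_sum_of_subset (Finset.erase_subset _ _)
  · push_neg at hzero
    rcases eq_or_lt_of_le hm1 with hm | hm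
    · -- singleton case
      obtain ⟨a, rfl⟩ := Finset.card_eq_one.mp (hcard.trans hm.symm)
      have haA : A a ≠ 0 := hzero a (Finset.mem_singleton_self a)
      have hsub : t ⊆ (A a).roots.toFinset := by
        intro x hx
        obtain ⟨hx0, hxz⟩ := ht x hx
        rw [Finset.sum_singleton] at hxz
        have hxγ : x ^ (γ a) ≠ 0 := (Real.rpow_pos_of_pos hx0 _).ne'
        rw [Multiset.mem_toFinset, Polynomial.mem_roots haA]
        exact (mul_eq_zero.mp hxz).resolve_right hxγ
      calc t.card ≤ (A a).roots.toFinset.card := Finset.card_le_card hsub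
        _ ≤ Multiset.card (A a).roots := (A a).roots.toFinset_card_le
        _ ≤ (A a).natDegree := (A a).card_roots'
        _ < n a := hdeg a (Finset.mem_singleton_self a)
        _ ≤ ∑ i ∈ {a}, n i := by rw [Finset.sum_singleton]
    · -- main case: card ≥ 2
      set i₀ := i₁ with hi₀
      set δ : ι → ℝ := fun i => γ i - γ i₀ with hδdef
      set d := (A i₀).natDegree + 1 with hd
      set g : ℕ → ℝ → ℝ :=
        fun k x => ∑ i ∈ s, (Titer (δ i) (A i) k).eval x * x ^ (δ i - k) with hg
      have hδint : ∀ i ∈ s, i ≠ i₀ → ∀ z : ℤ, δ i ≠ (z:ℝ) := by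
        intro i hi hii z
        exact hγ i hi i₀ hi₁s hii z
      have hder : ∀ k, ∀ x ∈ Set.Ioi (0:ℝ), HasDerivAt (g k) (g (k+1) x) x := by
        intro k x hx
        have hsum := HasDerivAt.sum
          (fun i (_ : i ∈ s) => Tpoly_hasDerivAt (δ i - k) (Titer (δ i) (A i) k) hx)
        convert hsum using 1
        · rfl
        · rfl
        · funext y
          exact (Finset.sum_apply y s (fun i (y : ℝ) => (Titer (δ i) (A i) k).eval y * y ^ (δ i - k))).symm
        apply Finset.sum_congr rfl
        intro i _
        rw [show (((k+1:ℕ)):ℝ) = (k:ℝ)+1 by push_cast; ring,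
          show δ i - ((k:ℝ)+1) = δ i - (k:ℝ) - 1 by ring]
        rfl
      have hg0 : ∀ x ∈ t, (0:ℝ) < x ∧ g 0 x = 0 := by
        intro x hx
        have hx0 := (ht x hx).1
        refine ⟨hx0, ?_⟩
        have hfac : x ^ (γ i₀) * g 0 x = ∑ i ∈ s, (A i).eval x * x ^ (γ i) := by
          rw [hg, Finset.mul_sum]
          apply Finset.sum_congr rfl
          intro i _
          show x ^ γ i₀ * ((Titer (δ i) (A i) 0).eval x * x ^ (δ i - (0:ℕ))) = _
          rw [show Titer (δ i) (A i) 0 = A i from rfl]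
          rw [show (δ i - ((0:ℕ):ℝ)) = γ i - γ i₀ by simp [hδdef]]
          rw [← mul_assoc, mul_comm (x ^ γ i₀), mul_assoc, ← Real.rpow_add hx0]
          ring_nf
        have := (ht x hx).2
        rw [← hfac] at this
        exact (mul_eq_zero.mp this).resolve_left (Real.rpow_pos_of_pos hx0 _).ne'
      have hchain : ∀ k, ∃ tk : Finset ℝ, t.card ≤ tk.card + k ∧
          ∀ x ∈ tk, (0:ℝ) < x ∧ g k x = 0 := by
        intro k
        induction k with
        | zero => exact ⟨t, by simp, hg0⟩
        | succ k ihk =>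
          obtain ⟨tk, h1, h2⟩ := ihk
          rcases tk.eq_empty_or_nonempty with rfl | hne
          · exact ⟨∅, by simp at h1 ⊢; omega, by simp⟩
          · obtain ⟨t', hcard', ht'⟩ := rolle_count (g k) (g (k+1)) (hder k) tk.card tk hne rfl h2
            refine ⟨t', by omega, ?_⟩
            intro x hx
            exact ⟨lt_trans (h2 _ (tk.min'_mem hne)).1 (ht' x hx).1, (ht' x hx).2⟩
      obtain ⟨td, hcard_td, htd⟩ := hchain d
      have hgd : ∀ x : ℝ, g d x =
          ∑ i ∈ s.erase i₀, (Titer (δ i) (A i) d).eval x * x ^ (δ i - d) := by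
        intro x
        rw [hg]
        rw [Finset.sum_erase]
        have hδ0 : δ i₀ = 0 := by simp [hδdef]
        rw [hδ0, Titer_zero_of_deg (A i₀)]
        simp
      have herase_card : (s.erase i₀).card < m := by
        rw [Finset.card_erase_of_mem hi₁s, hcard]; omega
      have herase_ne : (s.erase i₀).Nonempty := by
        rw [← Finset.card_pos, Finset.card_erase_of_mem hi₁s, hcard]; omega
      obtain ⟨i₂, hi₂⟩ := herase_ne
      have hbound : td.card < ∑ i ∈ s.erase i₀, n i := by
        apply ih _ herase_card _ rfl (fun i => δ i - d) n (fun i => Titer (δ i) (A i) d)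
        · intro i hi j hj hij z
          have := hγ i (Finset.mem_of_mem_erase hi) j (Finset.mem_of_mem_erase hj) hij z
          intro hcontra
          apply this
          rw [← hcontra]
          simp only [hδdef]
          ring
        · intro i hi
          rw [(Titer_natDegree (hδint i (Finset.mem_of_mem_erase hi) (Finset.ne_of_mem_erase hi))
            (A i) (hzero i (Finset.mem_of_mem_erase hi)) d).1]
          exact hdeg i (Finset.mem_of_mem_erase hi)
        · exact ⟨i₂, hi₂, (Titer_natDegree (hδint i₂ (Finset.mem_of_mem_erase hi₂)
            (Finset.ne_of_mem_erase hi₂)) (A i₂) (hzero i₂ (Finset.mem_of_mem_erase hi₂)) d).2⟩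
        · intro x hx
          refine ⟨(htd x hx).1, ?_⟩
          rw [← hgd x]
          exact (htd x hx).2
      have hdn : d ≤ n i₀ := hdeg i₀ hi₁s
      have hsum : n i₀ + ∑ i ∈ s.erase i₀, n i = ∑ i ∈ s, n i :=
        Finset.add_sum_erase s n hi₁s
      omega



lemma sign_const {G : ℝ → ℝ} {a b : ℝ} (hG : ContinuousOn G (Set.Ioo a b))
    (hnz : ∀ x ∈ Set.Ioo a b, G x ≠ 0) {x y : ℝ} (hx : x ∈ Set.Ioo a b)
    (hy : y ∈ Set.Ioo a b) : 0 < G x * G y := by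
  rcases lt_trichotomy (G x * G y) 0 with h | h | h
  · exfalso
    wlog hxy : x ≤ y generalizing x y
    · exact this hy hx (by linarith [mul_comm (G x) (G y)]) (le_of_not_ge hxy)
    have hsub : Set.Icc x y ⊆ Set.Ioo a b := fun z hz =>
      ⟨lt_of_lt_of_le hx.1 hz.1, lt_of_le_of_lt hz.2 hy.2⟩
    have hcont : ContinuousOn G (Set.Icc x y) := hG.mono hsub
    rcases lt_or_ge (G x) (G y) with hGxy | hGxy
    · have h0 : (0:ℝ) ∈ Set.Icc (G x) (G y) := by
        constructor
        · nlinarith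
        · nlinarith
      obtain ⟨z, hz, hz0⟩ := intermediate_value_Icc hxy hcont h0
      exact hnz z (hsub hz) hz0
    · have h0 : (0:ℝ) ∈ Set.Icc (G y) (G x) := by
        constructor
        · nlinarith
        · nlinarith
      obtain ⟨z, hz, hz0⟩ := intermediate_value_Icc' hxy hcont h0
      exact hnz z (hsub hz) hz0
  · exfalso
    rcases mul_eq_zero.mp h with h | h
    · exact hnz x hx h
    · exact hnz y hy h
  · exact h

lemma sign_poly {G : ℝ → ℝ} {b : ℝ} :
    ∀ (m : ℕ) (Z : Finset ℝ) (a : ℝ), Z.card = m → a < b →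
    ContinuousOn G (Set.Ioo a b) → ↑Z ⊆ Set.Ioo a b →
    (∀ x ∈ Set.Ioo a b, G x = 0 → x ∈ Z) →
    ∃ π : Polynomial ℝ, π.natDegree ≤ Z.card ∧ (∀ x : ℝ, π.eval x = 0 → x ∈ Z) ∧
      (∀ x ∈ Set.Ioo a b, x ∉ Z → 0 < G x * π.eval x) := by
  intro m
  induction m with
  | zero =>
    intro Z a hcard hab hG hZsub hzeros
    have hZ : Z = ∅ := Finset.card_eq_zero.mp hcard
    subst hZ
    have hnz : ∀ x ∈ Set.Ioo a b, G x ≠ 0 := fun x hx h => by simpa using hzeros x hx h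
    set x₀ := (a+b)/2 with hx₀
    have hx₀mem : x₀ ∈ Set.Ioo a b := ⟨by simp [hx₀]; linarith, by simp [hx₀]; linarith⟩
    refine ⟨Polynomial.C (G x₀), by simp, ?_, ?_⟩
    · intro x hx
      simp at hx
      exact absurd hx (hnz x₀ hx₀mem)
    · intro x hx _
      simp only [Polynomial.eval_C]
      exact sign_const hG hnz hx hx₀mem
  | succ m ih =>
    intro Z a hcard hab hG hZsub hzeros
    have hZne : Z.Nonempty := by rw [← Finset.card_pos, hcard]; omega
    set t := Z.min' hZne with htdef
    have htZ : t ∈ Z := Z.min'_mem hZne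
    have htIoo : t ∈ Set.Ioo a b := hZsub htZ
    set Z' := Z.erase t with hZ'def
    have hZ'card : Z'.card = m := by rw [hZ'def, Finset.card_erase_of_mem htZ, hcard]; omega
    have hZ'gt : ∀ z ∈ Z', t < z := fun z hz => Finset.min'_lt_of_mem_erase_min' _ hZne hz
    have hIooSub : Set.Ioo t b ⊆ Set.Ioo a b := fun z hz => ⟨lt_trans htIoo.1 hz.1, hz.2⟩
    obtain ⟨π₀, hdeg₀, hzero₀, hpos₀⟩ := ih Z' t hZ'card htIoo.2 (hG.mono hIooSub)
      (fun z hz => ⟨hZ'gt z hz, (hZsub (Finset.mem_of_mem_erase hz)).2⟩)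
      (fun x hx hGx => Finset.mem_erase.mpr ⟨ne_of_gt hx.1, hzeros x (hIooSub hx) hGx⟩)
    -- G and π₀ nonzero on (a, t)
    have hGnz : ∀ x ∈ Set.Ioo a t, G x ≠ 0 := by
      intro x hx h
      have := hzeros x ⟨hx.1, lt_trans hx.2 htIoo.2⟩ h
      exact absurd (Z.min'_le x this) (not_le.mpr hx.2)
    have hπ₀nz : ∀ x ∈ Set.Ioo a t, π₀.eval x ≠ 0 := by
      intro x hx h
      exact absurd (hZ'gt x (hzero₀ x h)) (not_lt.mpr hx.2.le)
    set x₀ := (a+t)/2 with hx₀def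
    have hx₀mem : x₀ ∈ Set.Ioo a t := ⟨by simp [hx₀def]; linarith [htIoo.1], by simp [hx₀def]; linarith [htIoo.1]⟩
    have hGsub : ContinuousOn G (Set.Ioo a t) :=
      hG.mono (fun z hz => ⟨hz.1, lt_trans hz.2 htIoo.2⟩)
    have hπcont : ContinuousOn (fun y => π₀.eval y) (Set.Ioo a t) :=
      π₀.continuous_aeval.continuousOn
    have hπ₀ne : π₀ ≠ 0 := fun h => hπ₀nz x₀ hx₀mem (by rw [h]; simp)
    -- key sign transfer on (a,t)
    have hsign : ∀ x ∈ Set.Ioo a t,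
        0 < (G x * π₀.eval x) * (G x₀ * π₀.eval x₀) := by
      intro x hx
      have h1 : 0 < G x * G x₀ := sign_const hGsub hGnz hx hx₀mem
      have h2 : 0 < π₀.eval x * π₀.eval x₀ := sign_const hπcont hπ₀nz hx hx₀mem
      nlinarith
    rcases lt_trichotomy (G x₀ * π₀.eval x₀) 0 with hτ | hτ | hτ
    · -- need extra factor (X - C t)
      refine ⟨π₀ * (Polynomial.X - Polynomial.C t), ?_, ?_, ?_⟩
      · rw [Polynomial.natDegree_mul hπ₀ne (Polynomial.X_sub_C_ne_zero t),
          Polynomial.natDegree_X_sub_C]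
        omega
      · intro x hx
        rw [Polynomial.eval_mul] at hx
        rcases mul_eq_zero.mp hx with h | h
        · exact Finset.mem_of_mem_erase (hzero₀ x h)
        · simp only [Polynomial.eval_sub, Polynomial.eval_X, Polynomial.eval_C, sub_eq_zero] at h
          exact h ▸ htZ
      · intro x hx hxZ
        rw [Polynomial.eval_mul]
        simp only [Polynomial.eval_sub, Polynomial.eval_X, Polynomial.eval_C]
        rcases lt_trichotomy x t with hxt | hxt | hxt
        · have hx' : x ∈ Set.Ioo a t := ⟨hx.1, hxt⟩
          have := hsign x hx'
          have hneg : G x * π₀.eval x < 0 := by nlinarith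
          nlinarith
        · exact absurd (hxt ▸ htZ) hxZ
        · have hx' : x ∈ Set.Ioo t b := ⟨hxt, hx.2⟩
          have hxZ' : x ∉ Z' := fun h => hxZ (Finset.mem_of_mem_erase h)
          have := hpos₀ x hx' hxZ'
          nlinarith
    · exact absurd hτ (by
        have := mul_ne_zero (hGnz x₀ hx₀mem) (hπ₀nz x₀ hx₀mem); exact this)
    · refine ⟨π₀, le_trans hdeg₀ (by omega), ?_, ?_⟩
      · intro x hx
        exact Finset.mem_of_mem_erase (hzero₀ x hx)
      · intro x hx hxZ
        rcases lt_trichotomy x t with hxt | hxt | hxt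
        · have hx' : x ∈ Set.Ioo a t := ⟨hx.1, hxt⟩
          have := hsign x hx'
          nlinarith
        · exact absurd (hxt ▸ htZ) hxZ
        · exact hpos₀ x ⟨hxt, hx.2⟩ (fun h => hxZ (Finset.mem_of_mem_erase h))

lemma moment_kernel_zero (p : ℕ) (n : Fin p → ℕ) (hn : ∀ i, 0 < n i)
    (S : ℕ) (hS : S = ∑ i, n i)
    (α : Fin p → ℝ) (hα : ∀ i, -1 < α i)
    (hαint : ∀ i j, i ≠ j → ∀ z : ℤ, α i - α j ≠ (z : ℝ))
    (β : ℝ) (hβ : -1 < β) (hS1 : 1 ≤ S)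
    (d : ℕ → ℝ)
    (hcond : ∀ i : Fin p, ∀ j : Fin (n i),
      ∑ m ∈ range S, d m * Bi (α i + (j:ℕ) + m) β = 0) :
    ∀ m < S, d m = 0 := by
  have hcardι : Fintype.card ((i : Fin p) × Fin (n i)) = S := by
    rw [Fintype.card_sigma]
    simp [hS]
  set ι := (i : Fin p) × Fin (n i) with hι
  let e : ι ≃ Fin S := Fintype.equivFinOfCardEq hcardι
  set γf : ι → ℝ := fun a => α a.1 + ((a.2 : ℕ) : ℝ) with hγf
  set M : Matrix ι ι ℝ := fun a b => Bi (γf a + (((e b) : ℕ) : ℝ)) β with hM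
  have hγpos : ∀ (a : ι) (m : ℕ), (-1:ℝ) < γf a + m := by
    intro a m
    have h1 : (0:ℝ) ≤ ((a.2 : ℕ) : ℝ) := Nat.cast_nonneg _
    have h2 : (0:ℝ) ≤ (m : ℝ) := Nat.cast_nonneg _
    have := hα a.1
    rw [hγf]
    simp only
    linarith
  -- left kernel is trivial
  have key : ∀ v : ι → ℝ, Matrix.vecMul v M = 0 → v = 0 := by
    intro v hv
    by_contra hvne
    have hcondv : ∀ m, m < S → ∑ a : ι, v a * Bi (γf a + (m:ℝ)) β = 0 := by
      intro m hm
      have h := congrFun hv (e.symm ⟨m, hm⟩)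
      have h2 : (Matrix.vecMul v M) (e.symm ⟨m, hm⟩)
          = ∑ a : ι, v a * Bi (γf a + (m:ℝ)) β := by
        rw [Matrix.vecMul, dotProduct]
        apply Finset.sum_congr rfl
        intro a _
        rw [hM]
        simp only [Equiv.apply_symm_apply]
      rw [h2] at h
      simpa using h
    -- the polynomials
    set A : Fin p → Polynomial ℝ :=
      fun i => ∑ j : Fin (n i), Polynomial.C (v ⟨i, j⟩) * Polynomial.X ^ (j:ℕ) with hA
    have hAcoeff : ∀ (i : Fin p) (j : Fin (n i)), (A i).coeff (j:ℕ) = v ⟨i, j⟩ := by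
      intro i j
      rw [hA]
      simp only
      rw [Polynomial.finset_sum_coeff]
      rw [Finset.sum_eq_single j]
      · simp
      · intro j' _ hj'
        rw [Polynomial.coeff_C_mul, Polynomial.coeff_X_pow]
        have hne : ((j:ℕ)) ≠ ((j':ℕ)) := fun hc => hj' (Fin.ext hc.symm)
        simp [hne]
      · intro h
        exact absurd (Finset.mem_univ j) h
    have hAdeg : ∀ i, (A i).natDegree < n i := by
      intro i
      have hle : (A i).natDegree ≤ n i - 1 := by
        rw [hA]
        apply Polynomial.natDegree_sum_le_of_forall_le
        intro j _
        refine le_trans (Polynomial.natDegree_C_mul_le _ _) ?_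
        rw [Polynomial.natDegree_X_pow]
        omega
      have := hn i
      omega
    have hAne : ∃ i, A i ≠ 0 := by
      have : ∃ a : ι, v a ≠ 0 := by
        by_contra hc
        push_neg at hc
        exact hvne (funext hc)
      obtain ⟨a, ha⟩ := this
      refine ⟨a.1, fun h0 => ha ?_⟩
      rw [← hAcoeff a.1 a.2]
      have : (⟨a.1, a.2⟩ : ι) = a := rfl
      rw [h0, Polynomial.coeff_zero]
    set G : ℝ → ℝ := fun x => ∑ a : ι, v a * x ^ (γf a) with hG
    have hGA : ∀ x : ℝ, 0 < x → G x = ∑ i : Fin p, (A i).eval x * x ^ (α i) := by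
      intro x hx
      rw [hG]
      simp only
      rw [← Finset.univ_sigma_univ, Finset.sum_sigma]
      apply Finset.sum_congr rfl
      intro i _
      rw [hA]
      simp only [Polynomial.eval_finset_sum, Polynomial.eval_mul, Polynomial.eval_C,
        Polynomial.eval_pow, Polynomial.eval_X, Finset.sum_mul]
      apply Finset.sum_congr rfl
      intro j _
      rw [hγf]
      simp only
      rw [Real.rpow_add hx, Real.rpow_natCast]
      ring
    -- zero count for G
    have hzcount : ∀ t : Finset ℝ, (∀ x ∈ t, 0 < x ∧ G x = 0) → t.card < S := by
      intro t ht
      have hγ : ∀ i ∈ (Finset.univ : Finset (Fin p)), ∀ j ∈ (Finset.univ : Finset (Fin p)),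
          i ≠ j → ∀ z : ℤ, α i - α j ≠ (z:ℝ) := fun i _ j _ hij => hαint i j hij
      have := descartes_aux (Finset.univ : Finset (Fin p)).card Finset.univ rfl α n A hγ
        (fun i _ => hAdeg i) (by obtain ⟨i, hi⟩ := hAne; exact ⟨i, Finset.mem_univ i, hi⟩) t
        (fun x hx => ⟨(ht x hx).1, by rw [← hGA x (ht x hx).1]; exact (ht x hx).2⟩)
      rw [hS]
      exact this
    -- the zero set
    set Zset : Set ℝ := {x | x ∈ Set.Ioo (0:ℝ) 1 ∧ G x = 0} with hZset
    have hZfin : Zset.Finite := by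
      by_contra hinf
      obtain ⟨t, htsub, htcard⟩ := Set.Infinite.exists_subset_card_eq hinf S
      have := hzcount t (fun x hx => ⟨(htsub hx).1.1, (htsub hx).2⟩)
      omega
    set Z : Finset ℝ := hZfin.toFinset with hZ
    have hZmem : ∀ x : ℝ, x ∈ Z ↔ (x ∈ Set.Ioo (0:ℝ) 1 ∧ G x = 0) := by
      intro x
      rw [hZ, Set.Finite.mem_toFinset]
      rfl
    have hZcard : Z.card < S :=
      hzcount Z (fun x hx => ⟨((hZmem x).mp hx).1.1, ((hZmem x).mp hx).2⟩)
    -- continuity of G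
    have hGcont : ContinuousOn G (Set.Ioo (0:ℝ) 1) := by
      rw [hG]
      apply continuousOn_finset_sum
      intro a _
      exact continuousOn_const.mul
        (ContinuousOn.rpow_const continuousOn_id (fun x hx => Or.inl (ne_of_gt hx.1)))
    obtain ⟨π, hπdeg, hπzero, hπpos⟩ := sign_poly Z.card Z 0 rfl one_pos hGcont
      (fun x hx => ((hZmem x).mp hx).1) (fun x hx hGx => (hZmem x).mpr ⟨hx, hGx⟩)
    have hπdegS : π.natDegree < S := lt_of_le_of_lt hπdeg hZcard
    set h : ℝ → ℝ := fun x => G x * π.eval x * (1 - x) ^ β with hh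
    have hexp : ∀ x ∈ Set.Ioo (0:ℝ) 1, h x =
        ∑ a : ι, ∑ m ∈ Finset.range S,
          (v a * π.coeff m) * (x ^ (γf a + (m:ℝ)) * (1-x) ^ β) := by
      intro x hx
      have hx0 : (0:ℝ) < x := hx.1
      rw [hh]
      simp only
      rw [hG]
      simp only
      rw [Polynomial.eval_eq_sum_range' hπdegS, Finset.sum_mul_sum, Finset.sum_mul]
      apply Finset.sum_congr rfl
      intro a _
      rw [Finset.sum_mul]
      apply Finset.sum_congr rfl
      intro m _
      have hsplit : x ^ (γf a + (m:ℝ)) = x ^ (γf a) * x ^ (m:ℕ) := by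
        rw [Real.rpow_add hx0, Real.rpow_natCast]
      rw [hsplit]
      ring
    have hintegrand : ∀ (a : ι), ∀ m ∈ Finset.range S, IntegrableOn
        (fun x : ℝ => (v a * π.coeff m) * (x ^ (γf a + (m:ℝ)) * (1-x) ^ β))
        (Set.Ioo (0:ℝ) 1) :=
      fun a m _ => (Bi_integrableOn (hγpos a m) hβ).const_mul _
    have hint : IntegrableOn h (Set.Ioo (0:ℝ) 1) := by
      apply (MeasureTheory.integrableOn_congr_fun hexp measurableSet_Ioo).mpr
      apply MeasureTheory.integrable_finset_sum
      intro a _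
      exact MeasureTheory.integrable_finset_sum _ (hintegrand a)
    have hzero : ∫ x in Set.Ioo (0:ℝ) 1, h x = 0 := by
      rw [MeasureTheory.setIntegral_congr_fun measurableSet_Ioo hexp]
      rw [MeasureTheory.integral_finset_sum _
        (fun a _ => MeasureTheory.integrable_finset_sum _ (hintegrand a))]
      have hterm : ∀ a : ι, ∫ x in Set.Ioo (0:ℝ) 1,
          (∑ m ∈ Finset.range S, (v a * π.coeff m) * (x ^ (γf a + (m:ℝ)) * (1-x) ^ β))
          = ∑ m ∈ Finset.range S, (v a * π.coeff m) * Bi (γf a + (m:ℝ)) β := by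
        intro a
        rw [MeasureTheory.integral_finset_sum _ (hintegrand a)]
        apply Finset.sum_congr rfl
        intro m _
        rw [MeasureTheory.integral_const_mul, Bi_def]
      rw [Finset.sum_congr rfl (fun a _ => hterm a), Finset.sum_comm]
      have : ∀ m ∈ Finset.range S,
          ∑ a : ι, (v a * π.coeff m) * Bi (γf a + (m:ℝ)) β = 0 := by
        intro m hm
        have h0 := hcondv m (Finset.mem_range.mp hm)
        calc ∑ a : ι, (v a * π.coeff m) * Bi (γf a + (m:ℝ)) β
            = π.coeff m * ∑ a : ι, v a * Bi (γf a + (m:ℝ)) β := by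
              rw [Finset.mul_sum]; apply Finset.sum_congr rfl; intro a _; ring
          _ = 0 := by rw [h0, mul_zero]
      rw [Finset.sum_congr rfl this, Finset.sum_const, smul_zero]
    have hpos : 0 < ∫ x in Set.Ioo (0:ℝ) 1, h x := by
      rw [MeasureTheory.setIntegral_pos_iff_support_of_nonneg_ae ?_ hint]
      · apply lt_of_lt_of_le ?_ (measure_mono ?_ :
          volume (Set.Ioo (0:ℝ) 1 \ ↑Z) ≤ volume (Function.support h ∩ Set.Ioo (0:ℝ) 1))
        · rw [measure_diff_null (Set.Finite.measure_zero (Finset.finite_toSet Z) volume)]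
          rw [Real.volume_Ioo]
          norm_num
        · intro x hx
          obtain ⟨hx1, hx2⟩ := hx
          have hxZ : x ∉ Z := by simpa using hx2
          have hpos' : 0 < G x * π.eval x := hπpos x hx1 hxZ
          have hw : (0:ℝ) < (1 - x) ^ β := Real.rpow_pos_of_pos (by
            have := hx1.2; simp only [Set.mem_Ioo] at hx1; linarith) _
          constructor
          · rw [Function.mem_support, hh]
            simp only
            positivity
          · exact hx1
      · rw [Filter.EventuallyLE, MeasureTheory.ae_restrict_iff' measurableSet_Ioo]
        apply Filter.Eventually.of_forall
        intro x hx
        simp only [Pi.zero_apply]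
        by_cases hxZ : x ∈ Z
        · have : G x = 0 := ((hZmem x).mp hxZ).2
          rw [hh]
          simp only
          rw [this, zero_mul, zero_mul]
        · have hpos' : 0 < G x * π.eval x := hπpos x hx hxZ
          have hw : (0:ℝ) < (1 - x) ^ β := Real.rpow_pos_of_pos (by
            simp only [Set.mem_Ioo] at hx; linarith [hx.2]) _
          rw [hh]
          simp only
          positivity
    rw [hzero] at hpos
    exact lt_irrefl 0 hpos
  -- from trivial left kernel to invertibility and right kernel
  have hdet : M.det ≠ 0 := by
    intro h0
    obtain ⟨v, hvne, hv⟩ := Matrix.exists_vecMul_eq_zero_iff.mpr h0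
    exact hvne (key v hv)
  have hw : (fun b : ι => d ((e b : ℕ))) = 0 := by
    by_contra hwne
    apply hdet
    apply Matrix.exists_mulVec_eq_zero_iff.mp
    refine ⟨fun b => d ((e b : ℕ)), hwne, ?_⟩
    funext a
    rw [Matrix.mulVec, dotProduct]
    have h1 : ∑ b : ι, M a b * d ((e b : ℕ))
        = ∑ mf : Fin S, Bi (γf a + ((mf : ℕ) : ℝ)) β * d (mf : ℕ) := by
      rw [← Equiv.sum_comp e (fun mf : Fin S => Bi (γf a + ((mf : ℕ) : ℝ)) β * d (mf : ℕ))]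
    rw [h1]
    have h2 : ∑ mf : Fin S, Bi (γf a + ((mf : ℕ) : ℝ)) β * d (mf : ℕ)
        = ∑ m ∈ Finset.range S, Bi (γf a + (m : ℝ)) β * d m := by
      rw [Finset.sum_range fun m => Bi (γf a + (m : ℝ)) β * d m]
    rw [h2]
    have h3 := hcond a.1 a.2
    simp only [Pi.zero_apply]
    rw [← h3]
    apply Finset.sum_congr rfl
    intro m _
    rw [hγf]
    simp only
    ring
  intro m hm
  have := congrFun hw (e.symm ⟨m, hm⟩)
  simpa using this

lemma qS_eq (S : ℕ) (q : ℕ → ℝ) (Q : Polynomial ℝ) (hQmonic : Q.Monic) (hQdeg : Q.natDegree = S)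
    (hq : ∀ x : ℝ, Q.eval x = ∑ k ∈ range (S + 1), q k * ∏ j ∈ range k, ((j : ℝ) - x)) :
    q S = (-1:ℝ)^S := by
  set R : Polynomial ℝ :=
    ∑ k ∈ range (S+1), Polynomial.C (q k) * ∏ j ∈ range k, (Polynomial.C (j:ℝ) - Polynomial.X)
    with hR
  have hQR : Q = R := by
    apply Polynomial.funext
    intro x
    rw [hq x, hR]
    rw [Polynomial.eval_finset_sum]
    apply Finset.sum_congr rfl
    intro k _
    rw [Polynomial.eval_mul, Polynomial.eval_C, Polynomial.eval_prod]
    congr 1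
    apply Finset.prod_congr rfl
    intro j _
    rw [Polynomial.eval_sub, Polynomial.eval_C, Polynomial.eval_X]
  have hRS : R.coeff S = q S * (-1:ℝ)^S := by
    rw [hR, Polynomial.finset_sum_coeff, Finset.sum_range_succ]
    have hsmall : ∀ k ∈ range S,
        (Polynomial.C (q k) * ∏ j ∈ range k, (Polynomial.C (j:ℝ) - Polynomial.X)).coeff S = 0 := by
      intro k hk
      apply Polynomial.coeff_eq_zero_of_natDegree_lt
      apply lt_of_le_of_lt (Polynomial.natDegree_C_mul_le _ _)
      apply lt_of_le_of_lt (Polynomial.natDegree_prod_le _ _)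
      apply lt_of_le_of_lt (Finset.sum_le_sum (g := fun _ => 1) ?_)
      · rw [Finset.sum_const, Finset.card_range, smul_eq_mul, mul_one]
        exact Finset.mem_range.mp hk
      · intro j _
        apply le_trans (Polynomial.natDegree_sub_le _ _)
        simp
    rw [Finset.sum_congr rfl hsmall, Finset.sum_const, smul_zero, zero_add]
    rw [Polynomial.coeff_C_mul]
    congr 1
    have hfac : ∀ j ∈ range S, (Polynomial.C (j:ℝ) - Polynomial.X)
        = (-1 : Polynomial ℝ) * (Polynomial.X - Polynomial.C (j:ℝ)) := by
      intro j _
      ring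
    rw [Finset.prod_congr rfl hfac, Finset.prod_mul_distrib, Finset.prod_const,
      Finset.card_range,
      show ((-1 : Polynomial ℝ))^S = Polynomial.C ((-1:ℝ)^S) by
        rw [← Polynomial.C_1, ← Polynomial.C_neg, ← Polynomial.C_pow],
      Polynomial.coeff_C_mul]
    have hmonic : (∏ j ∈ range S, (Polynomial.X - Polynomial.C (j:ℝ))).Monic :=
      Polynomial.monic_prod_of_monic _ _ (fun j _ => Polynomial.monic_X_sub_C _)
    have hdeg : (∏ j ∈ range S, (Polynomial.X - Polynomial.C (j:ℝ))).natDegree = S := by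
      rw [Polynomial.natDegree_prod _ _ (fun j _ => Polynomial.X_sub_C_ne_zero _)]
      simp only [Polynomial.natDegree_X_sub_C]
      rw [Finset.sum_const, Finset.card_range, smul_eq_mul, mul_one]
    have hc1 : (∏ j ∈ range S, (Polynomial.X - Polynomial.C (j:ℝ))).coeff S = 1 := by
      have hcn := hmonic.coeff_natDegree
      rw [hdeg] at hcn
      exact hcn
    rw [hc1]
    simp
  have hQS : Q.coeff S = 1 := by
    rw [← hQdeg]
    exact hQmonic.coeff_natDegree
  rw [hQR, hRS] at hQS
  have h2 : ((-1:ℝ)^S) * ((-1:ℝ)^S) = 1 := by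
    rw [← pow_add]
    exact Even.neg_one_pow ⟨S, by ring⟩
  calc q S = q S * ((-1:ℝ)^S * (-1:ℝ)^S) := by rw [h2, mul_one]
    _ = (q S * (-1:ℝ)^S) * (-1:ℝ)^S := by ring
    _ = (-1:ℝ)^S := by rw [hQS, one_mul]


/-- Relation between the coefficients of the type II Hahn polynomial in the basis
`(−x)_k` and the coefficients of the type II Jacobi–Piñeiro polynomial in the
power basis: `q_k = (−1)^k (N−k)!/(N−|n|)! · p_k`. -/
theorem hahn_jacobiPineiro_coefficient_relation
    (p : ℕ) (hp : 0 < p) (n : Fin p → ℕ) (hn : ∀ i, 0 < n i)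
    (S : ℕ) (hS : S = ∑ i, n i)
    (α : Fin p → ℝ) (hα : ∀ i, -1 < α i)
    (hαint : ∀ i j, i ≠ j → ∀ z : ℤ, α i - α j ≠ (z : ℝ))
    (β : ℝ) (hβ : -1 < β) (N : ℕ) (hS2 : 2 ≤ S) (hSN : S ≤ N)
    (P : Polynomial ℝ) (hPmonic : P.Monic) (hPdeg : P.natDegree = S)
    (hPorth : ∀ i, ∀ j < n i,
      ∫ x in Set.Ioo (0 : ℝ) 1, x ^ j * P.eval x * x ^ α i * (1 - x) ^ β = 0)
    (Q : Polynomial ℝ) (hQmonic : Q.Monic) (hQdeg : Q.natDegree = S)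
    (hQorth : ∀ i, ∀ j < n i,
      ∑ k ∈ range (N + 1),
        Q.eval (k : ℝ) * (Real.Gamma ((k : ℝ) + α i + j + 1) / Real.Gamma ((k : ℝ) + 1)) *
          (Real.Gamma (β + N - k + 1) / Real.Gamma ((N : ℝ) - k + 1)) = 0)
    (q : ℕ → ℝ)
    (hq : ∀ x : ℝ, Q.eval x = ∑ k ∈ range (S + 1), q k * ∏ j ∈ range k, ((j : ℝ) - x)) :
    ∀ k ≤ S,
      q k = (-1 : ℝ) ^ k * ((Nat.factorial (N - k) : ℝ) / (Nat.factorial (N - S) : ℝ)) *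
        P.coeff k := by
  have hαj : ∀ (i : Fin p) (j m : ℕ), (-1:ℝ) < α i + j + m := by
    intro i j m
    have h1 : (0:ℝ) ≤ (j:ℝ) := Nat.cast_nonneg j
    have h2 : (0:ℝ) ≤ (m:ℝ) := Nat.cast_nonneg m
    have := hα i
    linarith
  -- (a) Jacobi-Pineiro conditions in coefficient form
  have hJP : ∀ (i : Fin p) (j : Fin (n i)),
      ∑ m ∈ range (S+1), P.coeff m * Bi (α i + ((j:ℕ):ℝ) + (m:ℝ)) β = 0 := by
    intro i j
    have h0 := hPorth i (j:ℕ) j.isLt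
    have hcong : ∀ x ∈ Set.Ioo (0:ℝ) 1,
        x ^ (j:ℕ) * P.eval x * x ^ α i * (1-x) ^ β
        = ∑ m ∈ range (S+1), P.coeff m * (x ^ (α i + ((j:ℕ):ℝ) + (m:ℝ)) * (1-x) ^ β) := by
      intro x hx
      have hx0 : (0:ℝ) < x := hx.1
      rw [Polynomial.eval_eq_sum_range' (show P.natDegree < S+1 by omega)]
      rw [Finset.mul_sum, Finset.sum_mul, Finset.sum_mul]
      apply Finset.sum_congr rfl
      intro m _
      have hsplit : x ^ (α i + ((j:ℕ):ℝ) + (m:ℝ)) = x ^ α i * x ^ (j:ℕ) * x ^ (m:ℕ) := by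
        rw [Real.rpow_add hx0, Real.rpow_add hx0, Real.rpow_natCast, Real.rpow_natCast]
      rw [hsplit]
      ring
    rw [MeasureTheory.setIntegral_congr_fun measurableSet_Ioo hcong,
      MeasureTheory.integral_finset_sum _
        (fun m _ => (Bi_integrableOn (hαj i (j:ℕ) m) hβ).const_mul _)] at h0
    rw [← h0]
    apply Finset.sum_congr rfl
    intro m _
    rw [MeasureTheory.integral_const_mul, Bi_def]
  -- (b) Hahn conditions in coefficient form
  have hHahn : ∀ (i : Fin p) (j : Fin (n i)),
      ∑ m ∈ range (S+1), q m * ((-1:ℝ)^m *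
        (Real.Gamma ((N:ℝ) + (α i + ((j:ℕ):ℝ)) + β + 2) / (((N-m).factorial : ℕ) : ℝ)) *
        Bi ((α i + ((j:ℕ):ℝ)) + ((m:ℕ):ℝ)) β) = 0 := by
    intro i j
    have h0 := hQorth i (j:ℕ) j.isLt
    have hterm : ∀ k ∈ range (N+1),
        Q.eval ((k:ℕ):ℝ) * (Real.Gamma (((k:ℕ):ℝ) + α i + ((j:ℕ):ℝ) + 1) /
            Real.Gamma (((k:ℕ):ℝ) + 1)) *
          (Real.Gamma (β + (N:ℝ) - ((k:ℕ):ℝ) + 1) / Real.Gamma ((N:ℝ) - ((k:ℕ):ℝ) + 1))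
        = ∑ m ∈ range (S+1), q m * ((∏ j' ∈ range m, ((j':ℝ) - ((k:ℕ):ℝ))) *
            (Real.Gamma (((k:ℕ):ℝ) + (α i + ((j:ℕ):ℝ)) + 1) / Real.Gamma (((k:ℕ):ℝ) + 1)) *
            (Real.Gamma (β + (N:ℝ) - ((k:ℕ):ℝ) + 1) / Real.Gamma ((N:ℝ) - ((k:ℕ):ℝ) + 1))) := by
      intro k _
      rw [hq ((k:ℕ):ℝ),
        show ((k:ℕ):ℝ) + α i + ((j:ℕ):ℝ) + 1 = ((k:ℕ):ℝ) + (α i + ((j:ℕ):ℝ)) + 1 by ring,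
        Finset.sum_mul, Finset.sum_mul]
      apply Finset.sum_congr rfl
      intro m _
      ring
    rw [Finset.sum_congr rfl hterm, Finset.sum_comm] at h0
    have hinner : ∀ m ∈ range (S+1),
        ∑ k ∈ range (N+1), q m * ((∏ j' ∈ range m, ((j':ℝ) - ((k:ℕ):ℝ))) *
            (Real.Gamma (((k:ℕ):ℝ) + (α i + ((j:ℕ):ℝ)) + 1) / Real.Gamma (((k:ℕ):ℝ) + 1)) *
            (Real.Gamma (β + (N:ℝ) - ((k:ℕ):ℝ) + 1) / Real.Gamma ((N:ℝ) - ((k:ℕ):ℝ) + 1)))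
        = q m * ((-1:ℝ)^m *
            (Real.Gamma ((N:ℝ) + (α i + ((j:ℕ):ℝ)) + β + 2) / (((N-m).factorial : ℕ) : ℝ)) *
            Bi ((α i + ((j:ℕ):ℝ)) + ((m:ℕ):ℝ)) β) := by
      intro m hm
      have hmN : m ≤ N := by
        have := Finset.mem_range.mp hm
        omega
      rw [← Finset.mul_sum,
        hahn_sum_eval (by have := hα i; have : (0:ℝ) ≤ ((j:ℕ):ℝ) := Nat.cast_nonneg _; linarith)
          hβ N m hmN]
    rw [Finset.sum_congr rfl hinner] at h0
    exact h0
  -- divide by the Gamma factor and rescale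
  have hH2 : ∀ (i : Fin p) (j : Fin (n i)),
      ∑ m ∈ range (S+1), ((-1:ℝ)^m * (((N-S).factorial : ℕ):ℝ) / (((N-m).factorial : ℕ):ℝ)
          * q m) * Bi (α i + ((j:ℕ):ℝ) + ((m:ℕ):ℝ)) β = 0 := by
    intro i j
    have h0 := hHahn i j
    have hΓpos : 0 < Real.Gamma ((N:ℝ) + (α i + ((j:ℕ):ℝ)) + β + 2) := by
      apply Real.Gamma_pos_of_pos
      have h1 : (0:ℝ) ≤ (N:ℝ) := Nat.cast_nonneg N
      have h2 : (0:ℝ) ≤ ((j:ℕ):ℝ) := Nat.cast_nonneg _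
      have := hα i
      linarith
    have hfact : ∀ m : ℕ, (0:ℝ) < (((N-m).factorial : ℕ):ℝ) := by
      intro m
      exact_mod_cast (N-m).factorial_pos
    have hpull : ∑ m ∈ range (S+1), q m * ((-1:ℝ)^m *
        (Real.Gamma ((N:ℝ) + (α i + ((j:ℕ):ℝ)) + β + 2) / (((N-m).factorial : ℕ) : ℝ)) *
        Bi ((α i + ((j:ℕ):ℝ)) + ((m:ℕ):ℝ)) β)
        = Real.Gamma ((N:ℝ) + (α i + ((j:ℕ):ℝ)) + β + 2) *
          ∑ m ∈ range (S+1), ((-1:ℝ)^m / (((N-m).factorial : ℕ):ℝ) * q m) *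
            Bi (α i + ((j:ℕ):ℝ) + ((m:ℕ):ℝ)) β := by
      rw [Finset.mul_sum]
      apply Finset.sum_congr rfl
      intro m _
      ring
    rw [hpull] at h0
    have h1 := (mul_eq_zero.mp h0).resolve_left (ne_of_gt hΓpos)
    calc ∑ m ∈ range (S+1), ((-1:ℝ)^m * (((N-S).factorial : ℕ):ℝ) / (((N-m).factorial : ℕ):ℝ)
          * q m) * Bi (α i + ((j:ℕ):ℝ) + ((m:ℕ):ℝ)) β
        = (((N-S).factorial : ℕ):ℝ) * ∑ m ∈ range (S+1),
            ((-1:ℝ)^m / (((N-m).factorial : ℕ):ℝ) * q m) *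
            Bi (α i + ((j:ℕ):ℝ) + ((m:ℕ):ℝ)) β := by
          rw [Finset.mul_sum]
          apply Finset.sum_congr rfl
          intro m _
          ring
      _ = 0 := by rw [h1, mul_zero]
  -- combine into kernel conditions
  set d : ℕ → ℝ := fun m =>
    P.coeff m - (-1:ℝ)^m * (((N-S).factorial : ℕ):ℝ) / (((N-m).factorial : ℕ):ℝ) * q m
    with hd
  have hqS : q S = (-1:ℝ)^S := qS_eq S q Q hQmonic hQdeg hq
  have hPS : P.coeff S = 1 := by
    have h := hPmonic.coeff_natDegree
    rw [hPdeg] at h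
    exact h
  have hdS : d S = 0 := by
    rw [hd]
    simp only
    rw [hPS, hqS]
    have hsq : (-1:ℝ)^S * (-1:ℝ)^S = 1 := by
      rw [← pow_add]
      exact Even.neg_one_pow ⟨S, by ring⟩
    have hfS : (((N-S).factorial : ℕ):ℝ) ≠ 0 := by
      exact_mod_cast (N-S).factorial_pos.ne'
    field_simp
    linarith [hsq]
  have hdcond : ∀ (i : Fin p) (j : Fin (n i)),
      ∑ m ∈ range S, d m * Bi (α i + ((j:ℕ):ℝ) + ((m:ℕ):ℝ)) β = 0 := by
    intro i j
    have h1 := hJP i j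
    have h2 := hH2 i j
    have h3 : ∑ m ∈ range (S+1), d m * Bi (α i + ((j:ℕ):ℝ) + ((m:ℕ):ℝ)) β = 0 := by
      have hsplit : ∀ m ∈ range (S+1),
          d m * Bi (α i + ((j:ℕ):ℝ) + ((m:ℕ):ℝ)) β
          = P.coeff m * Bi (α i + ((j:ℕ):ℝ) + ((m:ℕ):ℝ)) β
            - ((-1:ℝ)^m * (((N-S).factorial : ℕ):ℝ) / (((N-m).factorial : ℕ):ℝ) * q m) *
              Bi (α i + ((j:ℕ):ℝ) + ((m:ℕ):ℝ)) β := by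
        intro m _
        rw [hd]
        ring
      rw [Finset.sum_congr rfl hsplit, Finset.sum_sub_distrib, h1, h2, sub_zero]
    rw [Finset.sum_range_succ, hdS, zero_mul, add_zero] at h3
    exact h3
  have hker := moment_kernel_zero p n hn S hS α hα hαint β hβ (by omega) d hdcond
  -- conclude
  intro k hk
  have hdk : d k = 0 := by
    rcases lt_or_eq_of_le hk with h | h
    · exact hker k h
    · rw [h]; exact hdS
  rw [hd] at hdk
  simp only at hdk
  have hPck : P.coeff k = (-1:ℝ)^k * (((N-S).factorial : ℕ):ℝ) / (((N-k).factorial : ℕ):ℝ) * q k := by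
    linarith [hdk]
  rw [hPck]
  have hsq : (-1:ℝ)^k * (-1:ℝ)^k = 1 := by
    rw [← pow_add]
    exact Even.neg_one_pow ⟨k, by ring⟩
  have hfS : (((N-S).factorial : ℕ):ℝ) ≠ 0 := by exact_mod_cast (N-S).factorial_pos.ne'
  have hfk : (((N-k).factorial : ℕ):ℝ) ≠ 0 := by exact_mod_cast (N-k).factorial_pos.ne'
  field_simp
  linear_combination (-q k) * hsq

end
end
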